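/- arXiv:1508.00701 — 5 statements merged into one kernel-verified Lean document; each statement's English description precedes it below -/
import Mathlib

section
/- The kernel-based autoconvolution operator F : X → Y is Fréchet differentiable at every f ∈ X, and its Fréchet derivative F'(f) : X → Y is the bounded linear operator given by [F'(f)h](s) = 2 ∫_{max(s−1,0)}^{min(s,1)} k(s,τ) f(s−τ) h(τ) dτ for 0 ≤ s ≤ 2 and h ∈ X. -/
open MeasureTheory Complex Set Filter Topology
open scoped ENNReal

noncomputable section

/-- Lebesgue measure restricted to `(0,1)`. -/
abbrev μ1 : Measure ℝ := volume.restrict (Set.Ioo (0:ℝ) 1)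
/-- Lebesgue measure restricted to `(0,2)`. -/
abbrev μ2 : Measure ℝ := volume.restrict (Set.Ioo (0:ℝ) 2)
/-- `X = L²_ℂ(0,1)`. -/
abbrev X : Type := Lp ℂ 2 μ1
/-- `Y = L²_ℂ(0,2)`. -/
abbrev Y : Type := Lp ℂ 2 μ2
/-- The parallelogram `𝔓 = {(s,τ) : 0 ≤ τ ≤ 1, τ ≤ s ≤ τ+1}`. -/
def Par : Set (ℝ × ℝ) := {p | 0 ≤ p.2 ∧ p.2 ≤ 1 ∧ p.2 ≤ p.1 ∧ p.1 ≤ p.2 + 1}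

/-- Weak (sequential) convergence of a sequence in a complex inner product space. -/
def WConv {E : Type*} [NormedAddCommGroup E] [InnerProductSpace ℂ E]
    (u : ℕ → E) (x : E) : Prop :=
  ∀ g : E, Tendsto (fun n => (inner ℂ (u n) g : ℂ)) atTop (𝓝 (inner ℂ x g))

/-! ### Auxiliary machinery for the proof of `stmt1` -/

namespace AutoconvAux

/-- The basic quadratic integral expression. -/
def Q (k : ℝ × ℝ → ℂ) (g₁ g₂ : ℝ → ℂ) (s : ℝ) : ℂ :=
  ∫ τ in (max (s - 1) 0)..(min s 1), k (s, τ) * g₁ (s - τ) * g₂ τ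

lemma sub_min (s : ℝ) : s - min s 1 = max (s - 1) 0 := by
  rcases le_total s 1 with h | h
  · rw [min_eq_left h, max_eq_right (by linarith : s - 1 ≤ (0:ℝ))]; ring
  · rw [min_eq_right h, max_eq_left (by linarith : (0:ℝ) ≤ s - 1)]

lemma sub_max (s : ℝ) : s - max (s - 1) 0 = min s 1 := by
  rcases le_total s 1 with h | h
  · rw [max_eq_right (by linarith : s - 1 ≤ (0:ℝ)), min_eq_left h]; ring
  · rw [max_eq_left (by linarith : (0:ℝ) ≤ s - 1), min_eq_right h]; ring

lemma mem_Par_iff {s τ : ℝ} : (s, τ) ∈ Par ↔ max (s - 1) 0 ≤ τ ∧ τ ≤ min s 1 := by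
  simp only [Par, Set.mem_setOf_eq, max_le_iff, le_min_iff]
  constructor
  · rintro ⟨h1, h2, h3, h4⟩; exact ⟨⟨by linarith, h1⟩, h3, h2⟩
  · rintro ⟨⟨h1, h2⟩, h3, h4⟩; exact ⟨h2, h4, h3, by linarith⟩

lemma hab {s : ℝ} (hs0 : 0 ≤ s) (hs2 : s ≤ 2) : max (s - 1) 0 ≤ min s 1 := by
  simp only [max_le_iff, le_min_iff]
  refine ⟨⟨?_, ?_⟩, ?_, ?_⟩ <;> linarith

lemma Ioc_subset {s : ℝ} : Ioc (max (s - 1) 0) (min s 1) ⊆ Ioc 0 1 :=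
  Ioc_subset_Ioc (le_max_right _ _) (min_le_right _ _)

section Symm

variable {k : ℝ × ℝ → ℂ}

lemma k_symm' (hk_supp : ∀ p, p ∉ Par → k p = 0)
    (hk_symm : ∀ p ∈ Par, k p = k (p.1, p.1 - p.2)) (s u : ℝ) :
    k (s, u) = k (s, s - u) := by
  by_cases h : (s, u) ∈ Par
  · exact hk_symm _ h
  · rw [hk_supp _ h, hk_supp]
    intro hc
    apply h
    rw [mem_Par_iff] at hc ⊢
    have e1 := sub_min s; have e2 := sub_max s
    exact ⟨by linarith [hc.2], by linarith [hc.1]⟩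

lemma Q_symm (hk_supp : ∀ p, p ∉ Par → k p = 0)
    (hk_symm : ∀ p ∈ Par, k p = k (p.1, p.1 - p.2)) (g₁ g₂ : ℝ → ℂ) (s : ℝ) :
    Q k g₁ g₂ s = Q k g₂ g₁ s := by
  have e1 := sub_min s; have e2 := sub_max s
  unfold Q
  have key : ∀ τ, k (s, τ) * g₁ (s - τ) * g₂ τ
      = (fun u => k (s, u) * g₂ (s - u) * g₁ u) (s - τ) := by
    intro τ
    simp only [sub_sub_cancel]
    rw [← k_symm' hk_supp hk_symm]
    ring
  rw [intervalIntegral.integral_congr (g := fun τ =>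
      (fun u => k (s, u) * g₂ (s - u) * g₁ u) (s - τ)) (fun τ _ => key τ)]
  rw [intervalIntegral.integral_comp_sub_left (fun u => k (s, u) * g₂ (s - u) * g₁ u) s]
  rw [e1, e2]

end Symm

lemma preimage_sub (s : ℝ) :
    (fun τ => s - τ) ⁻¹' (Ico (max (s - 1) 0) (min s 1)) = Ioc (max (s - 1) 0) (min s 1) := by
  have e1 := sub_min s; have e2 := sub_max s
  ext τ
  simp only [mem_preimage, mem_Ico, mem_Ioc]
  constructor <;> intro h <;> constructor <;> linarith [h.1, h.2]

lemma measEmb_sub (s : ℝ) : MeasurableEmbedding (fun τ : ℝ => s - τ) :=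
  (MeasurableEquiv.subLeft s).measurableEmbedding

lemma integrableOn_comp_sub {s : ℝ} (φ : ℝ → ℝ)
    (hφ : IntegrableOn φ (Ioc (max (s - 1) 0) (min s 1)) volume) :
    IntegrableOn (fun τ => φ (s - τ)) (Ioc (max (s - 1) 0) (min s 1)) volume := by
  have h1 : IntegrableOn φ (Ico (max (s - 1) 0) (min s 1)) volume := by
    rwa [IntegrableOn, Measure.restrict_congr_set Ico_ae_eq_Ioc]
  have h2 := (Measure.measurePreserving_sub_left volume s).integrableOn_comp_preimage (measEmb_sub s)
    (f := φ) (s := Ico (max (s - 1) 0) (min s 1))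
  rw [preimage_sub] at h2
  exact h2.mpr h1

lemma setIntegral_comp_sub {s : ℝ} (φ : ℝ → ℝ) :
    ∫ τ in Ioc (max (s - 1) 0) (min s 1), φ (s - τ)
      = ∫ t in Ioc (max (s - 1) 0) (min s 1), φ t := by
  have h := (Measure.measurePreserving_sub_left volume s).setIntegral_preimage_emb (measEmb_sub s)
    φ (Ico (max (s - 1) 0) (min s 1))
  rw [preimage_sub] at h
  rw [h]
  exact setIntegral_congr_set Ico_ae_eq_Ioc

section Core

variable {k : ℝ × ℝ → ℂ} {M : ℝ}

lemma integrableOn_norm_prod {s : ℝ} {g₁ g₂ : ℝ → ℂ}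
    (hm1 : StronglyMeasurable g₁) (hm2 : StronglyMeasurable g₂)
    (h1 : IntegrableOn (fun t => ‖g₁ t‖ ^ 2) (Ioc (0:ℝ) 1) volume)
    (h2 : IntegrableOn (fun t => ‖g₂ t‖ ^ 2) (Ioc (0:ℝ) 1) volume) :
    IntegrableOn (fun τ => ‖g₁ (s - τ)‖ * ‖g₂ τ‖) (Ioc (max (s - 1) 0) (min s 1)) volume := by
  have h1A := h1.mono_set (Ioc_subset (s := s))
  have h2A := h2.mono_set (Ioc_subset (s := s))
  have h1c := integrableOn_comp_sub (fun t => ‖g₁ t‖ ^ 2) h1A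
  refine Integrable.mono' ((h1c.add h2A).div_const 2) ?_ ?_
  · exact ((hm1.comp_measurable (measurable_const.sub measurable_id)).norm.mul
      hm2.norm).aestronglyMeasurable
  · refine Eventually.of_forall fun τ => ?_
    simp only [Pi.add_apply]
    rw [Real.norm_of_nonneg (by positivity)]
    nlinarith [sq_nonneg (‖g₁ (s - τ)‖ - ‖g₂ τ‖)]

lemma integrableOn_ker (hM : ∀ p, ‖k p‖ ≤ M) (hk_cont : ContinuousOn k Par)
    {s : ℝ} {g₁ g₂ : ℝ → ℂ}
    (hm1 : StronglyMeasurable g₁) (hm2 : StronglyMeasurable g₂)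
    (h1 : IntegrableOn (fun t => ‖g₁ t‖ ^ 2) (Ioc (0:ℝ) 1) volume)
    (h2 : IntegrableOn (fun t => ‖g₂ t‖ ^ 2) (Ioc (0:ℝ) 1) volume) :
    IntegrableOn (fun τ => k (s, τ) * g₁ (s - τ) * g₂ τ)
      (Ioc (max (s - 1) 0) (min s 1)) volume := by
  have hprod := integrableOn_norm_prod (s := s) hm1 hm2 h1 h2
  refine Integrable.mono' (hprod.const_mul M) ?_ ?_
  · have hk : ContinuousOn (fun τ => k (s, τ)) (Ioc (max (s - 1) 0) (min s 1)) := by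
      refine hk_cont.comp ((Continuous.continuousOn (by continuity))) ?_
      intro τ hτ
      exact mem_Par_iff.mpr ⟨hτ.1.le, hτ.2⟩
    exact ((hk.aestronglyMeasurable measurableSet_Ioc).mul
        ((hm1.comp_measurable (measurable_const.sub measurable_id)).aestronglyMeasurable)).mul
        hm2.aestronglyMeasurable
  · refine Eventually.of_forall fun τ => ?_
    calc ‖k (s, τ) * g₁ (s - τ) * g₂ τ‖ = ‖k (s, τ)‖ * ‖g₁ (s - τ)‖ * ‖g₂ τ‖ := by
          rw [norm_mul, norm_mul]
    _ ≤ M * (‖g₁ (s - τ)‖ * ‖g₂ τ‖) := by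
          rw [mul_assoc]
          exact mul_le_mul_of_nonneg_right (hM _) (by positivity)

lemma intervalIntegrable_ker (hM : ∀ p, ‖k p‖ ≤ M) (hk_cont : ContinuousOn k Par)
    {s : ℝ} (hs0 : 0 ≤ s) (hs2 : s ≤ 2) {g₁ g₂ : ℝ → ℂ}
    (hm1 : StronglyMeasurable g₁) (hm2 : StronglyMeasurable g₂)
    (h1 : IntegrableOn (fun t => ‖g₁ t‖ ^ 2) (Ioc (0:ℝ) 1) volume)
    (h2 : IntegrableOn (fun t => ‖g₂ t‖ ^ 2) (Ioc (0:ℝ) 1) volume) :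
    IntervalIntegrable (fun τ => k (s, τ) * g₁ (s - τ) * g₂ τ) volume
      (max (s - 1) 0) (min s 1) := by
  rw [intervalIntegrable_iff_integrableOn_Ioc_of_le (hab hs0 hs2)]
  exact integrableOn_ker hM hk_cont hm1 hm2 h1 h2

lemma Q_add (hM : ∀ p, ‖k p‖ ≤ M) (hk_cont : ContinuousOn k Par)
    {s : ℝ} (hs0 : 0 ≤ s) (hs2 : s ≤ 2) {f g : ℝ → ℂ}
    (hmf : StronglyMeasurable f) (hmg : StronglyMeasurable g)
    (hf : IntegrableOn (fun t => ‖f t‖ ^ 2) (Ioc (0:ℝ) 1) volume)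
    (hg : IntegrableOn (fun t => ‖g t‖ ^ 2) (Ioc (0:ℝ) 1) volume) :
    Q k (fun t => f t + g t) (fun t => f t + g t) s
      = Q k f f s + Q k f g s + Q k g f s + Q k g g s := by
  have i11 := intervalIntegrable_ker hM hk_cont hs0 hs2 hmf hmf hf hf
  have i12 := intervalIntegrable_ker hM hk_cont hs0 hs2 hmf hmg hf hg
  have i21 := intervalIntegrable_ker hM hk_cont hs0 hs2 hmg hmf hg hf
  have i22 := intervalIntegrable_ker hM hk_cont hs0 hs2 hmg hmg hg hg
  unfold Q
  have key : ∀ τ, k (s, τ) * (f (s - τ) + g (s - τ)) * (f τ + g τ)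
      = (k (s, τ) * f (s - τ) * f τ + k (s, τ) * f (s - τ) * g τ)
        + (k (s, τ) * g (s - τ) * f τ) + (k (s, τ) * g (s - τ) * g τ) := fun τ => by ring
  rw [intervalIntegral.integral_congr (fun τ _ => key τ)]
  rw [intervalIntegral.integral_add ((i11.add i12).add i21) i22,
    intervalIntegral.integral_add (i11.add i12) i21,
    intervalIntegral.integral_add i11 i12]

lemma Q_bound (hM : ∀ p, ‖k p‖ ≤ M) (hM0 : 0 ≤ M) (hk_cont : ContinuousOn k Par)
    {s : ℝ} (hs0 : 0 ≤ s) (hs2 : s ≤ 2) {g : ℝ → ℂ}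
    (hm : StronglyMeasurable g)
    (hg : IntegrableOn (fun t => ‖g t‖ ^ 2) (Ioc (0:ℝ) 1) volume) :
    ‖Q k g g s‖ ≤ M * ∫ t in Ioc (0:ℝ) 1, ‖g t‖ ^ 2 := by
  have hab' := hab hs0 hs2
  have hsub := Ioc_subset (s := s)
  have hker := integrableOn_ker (s := s) hM hk_cont hm hm hg hg
  have hgA := hg.mono_set hsub
  have hgc := integrableOn_comp_sub (s := s) (fun t => ‖g t‖ ^ 2) hgA
  have hprod := integrableOn_norm_prod (s := s) hm hm hg hg
  set I := ∫ t in Ioc (0:ℝ) 1, ‖g t‖ ^ 2 with hI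
  have hI0 : 0 ≤ I := setIntegral_nonneg measurableSet_Ioc (fun t _ => by positivity)
  have s1 : ‖Q k g g s‖
      ≤ ∫ τ in Ioc (max (s - 1) 0) (min s 1), ‖k (s, τ) * g (s - τ) * g τ‖ := by
    have := intervalIntegral.norm_integral_le_integral_norm_uIoc
      (f := fun τ => k (s, τ) * g (s - τ) * g τ) (a := max (s - 1) 0) (b := min s 1)
      (μ := volume)
    rwa [uIoc_of_le hab'] at this
  have s2 : ∫ τ in Ioc (max (s - 1) 0) (min s 1), ‖k (s, τ) * g (s - τ) * g τ‖
      ≤ M * ∫ τ in Ioc (max (s - 1) 0) (min s 1), ‖g (s - τ)‖ * ‖g τ‖ := by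
    rw [← integral_const_mul]
    refine setIntegral_mono_on hker.norm (hprod.const_mul M) measurableSet_Ioc fun τ _ => ?_
    calc ‖k (s, τ) * g (s - τ) * g τ‖ = ‖k (s, τ)‖ * ‖g (s - τ)‖ * ‖g τ‖ := by
          rw [norm_mul, norm_mul]
    _ ≤ M * (‖g (s - τ)‖ * ‖g τ‖) := by
          rw [mul_assoc]
          exact mul_le_mul_of_nonneg_right (hM _) (by positivity)
  have hcs : ∫ τ in Ioc (max (s - 1) 0) (min s 1), ‖g (s - τ)‖ * ‖g τ‖ ≤ I := by
    have hq : (2:ℝ).HolderConjugate 2 := Real.HolderConjugate.two_two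
    have hof : ENNReal.ofReal (2:ℝ) = 2 := by
      rw [ENNReal.ofReal_ofNat]
    have m1 : MemLp (fun τ => ‖g (s - τ)‖) (ENNReal.ofReal (2:ℝ))
        (volume.restrict (Ioc (max (s - 1) 0) (min s 1))) := by
      rw [hof]
      exact (memLp_two_iff_integrable_sq
        ((hm.comp_measurable (measurable_const.sub measurable_id)).norm.aestronglyMeasurable)).mpr hgc
    have m2 : MemLp (fun τ => ‖g τ‖) (ENNReal.ofReal (2:ℝ))
        (volume.restrict (Ioc (max (s - 1) 0) (min s 1))) := by
      rw [hof]
      exact (memLp_two_iff_integrable_sq hm.norm.aestronglyMeasurable).mpr hgA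
    have hCS := integral_mul_le_Lp_mul_Lq_of_nonneg
      (μ := volume.restrict (Ioc (max (s - 1) 0) (min s 1))) hq
      (Eventually.of_forall fun τ => norm_nonneg _)
      (Eventually.of_forall fun τ => norm_nonneg _) m1 m2
    have hrpow : ∀ x : ℝ, x ^ (2:ℝ) = x ^ (2:ℕ) := fun x => by
      rw [show (2:ℝ) = ((2:ℕ):ℝ) by norm_num, Real.rpow_natCast]
    simp only [hrpow] at hCS
    have b1 : ∫ τ in Ioc (max (s - 1) 0) (min s 1), ‖g (s - τ)‖ ^ (2:ℕ) ≤ I := by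
      rw [setIntegral_comp_sub (s := s) (fun t => ‖g t‖ ^ 2)]
      exact setIntegral_mono_set hg (Eventually.of_forall fun t => by positivity)
        (HasSubset.Subset.eventuallyLE hsub)
    have b2 : ∫ τ in Ioc (max (s - 1) 0) (min s 1), ‖g τ‖ ^ (2:ℕ) ≤ I :=
      setIntegral_mono_set hg (Eventually.of_forall fun t => by positivity)
        (HasSubset.Subset.eventuallyLE hsub)
    have n1 : 0 ≤ ∫ τ in Ioc (max (s - 1) 0) (min s 1), ‖g (s - τ)‖ ^ (2:ℕ) :=
      setIntegral_nonneg measurableSet_Ioc (fun t _ => by positivity)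
    have n2 : 0 ≤ ∫ τ in Ioc (max (s - 1) 0) (min s 1), ‖g τ‖ ^ (2:ℕ) :=
      setIntegral_nonneg measurableSet_Ioc (fun t _ => by positivity)
    calc ∫ τ in Ioc (max (s - 1) 0) (min s 1), ‖g (s - τ)‖ * ‖g τ‖ ≤ _ := hCS
    _ ≤ I ^ (1/2 : ℝ) * I ^ (1/2 : ℝ) := by
        exact mul_le_mul (Real.rpow_le_rpow n1 b1 (by norm_num))
          (Real.rpow_le_rpow n2 b2 (by norm_num))
          (Real.rpow_nonneg n2 _) (Real.rpow_nonneg hI0 _)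
    _ = I := by
        rw [← Real.rpow_add' hI0 (by norm_num)]
        norm_num
  calc ‖Q k g g s‖ ≤ _ := s1
  _ ≤ _ := s2
  _ ≤ M * I := mul_le_mul_of_nonneg_left hcs hM0

lemma Q_congr {s : ℝ} (hs0 : 0 ≤ s) (hs2 : s ≤ 2) {g₁ g₂ g₁' g₂' : ℝ → ℂ}
    (e1 : g₁ =ᵐ[volume.restrict (Ioo (0:ℝ) 1)] g₁')
    (e2 : g₂ =ᵐ[volume.restrict (Ioo (0:ℝ) 1)] g₂') (k : ℝ × ℝ → ℂ) :
    Q k g₁ g₂ s = Q k g₁' g₂' s := by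
  unfold Q
  apply intervalIntegral.integral_congr_ae
  have E1 : ∀ᵐ t ∂(volume : Measure ℝ), t ∈ Ioo (0:ℝ) 1 → g₁ t = g₁' t :=
    (ae_restrict_iff' measurableSet_Ioo).mp e1
  have E2 : ∀ᵐ t ∂(volume : Measure ℝ), t ∈ Ioo (0:ℝ) 1 → g₂ t = g₂' t :=
    (ae_restrict_iff' measurableSet_Ioo).mp e2
  have E1' : ∀ᵐ τ ∂(volume : Measure ℝ),
      s - τ ∈ Ioo (0:ℝ) 1 → g₁ (s - τ) = g₁' (s - τ) := by
    rw [ae_iff] at E1 ⊢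
    have hset : {τ | ¬(s - τ ∈ Ioo (0:ℝ) 1 → g₁ (s - τ) = g₁' (s - τ))}
        = (fun τ => s - τ) ⁻¹' {t | ¬(t ∈ Ioo (0:ℝ) 1 → g₁ t = g₁' t)} := rfl
    rw [hset]
    exact (Measure.measurePreserving_sub_left volume s).quasiMeasurePreserving.preimage_null E1
  have hne1 : ∀ᵐ τ : ℝ ∂volume, τ ≠ 1 := by
    refine ae_iff.mpr ?_
    simp only [ne_eq, not_not, setOf_eq_eq_singleton, measure_singleton]
  have hnes : ∀ᵐ τ : ℝ ∂volume, τ ≠ s := by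
    refine ae_iff.mpr ?_
    simp only [ne_eq, not_not, setOf_eq_eq_singleton, measure_singleton]
  filter_upwards [E1', E2, hne1, hnes] with τ H1 H2 Hne1 Hnes hτ
  rw [uIoc_of_le (hab hs0 hs2)] at hτ
  have hmax : (0:ℝ) ≤ max (s - 1) 0 := le_max_right _ _
  have hmin1 : min s 1 ≤ 1 := min_le_right _ _
  have hmins : min s 1 ≤ s := min_le_left _ _
  have hsm : s - 1 ≤ max (s - 1) 0 := le_max_left _ _
  have hτI : τ ∈ Ioo (0:ℝ) 1 := by
    refine ⟨by linarith [hτ.1], ?_⟩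
    rcases lt_or_eq_of_le (hτ.2.trans hmin1) with h | h
    · exact h
    · exact absurd h Hne1
  have hsτ : s - τ ∈ Ioo (0:ℝ) 1 := by
    constructor
    · rcases lt_or_eq_of_le (hτ.2.trans hmins) with h | h
      · linarith
      · exact absurd h Hnes
    · linarith [hτ.1]
  rw [H1 hsτ, H2 hτI]

end Core

lemma int_sq_of_Lp (g : X) :
    IntegrableOn (fun t => ‖(g : ℝ → ℂ) t‖ ^ 2) (Ioc (0:ℝ) 1) volume := by
  have h1 : MemLp (g : ℝ → ℂ) 2 μ1 := Lp.memLp g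
  have h2 := h1.integrable_norm_rpow (by norm_num) (by norm_num)
  have h3 : Integrable (fun t => ‖(g : ℝ → ℂ) t‖ ^ 2) (volume.restrict (Ioo (0:ℝ) 1)) := by
    have he : ∀ x : ℝ, ‖(g : ℝ → ℂ) x‖ ^ (2:ℝ≥0∞).toReal = ‖(g : ℝ → ℂ) x‖ ^ (2:ℕ) := by
      intro x
      rw [show (2:ℝ≥0∞).toReal = ((2:ℕ):ℝ) by simp, Real.rpow_natCast]
    simpa only [he] using h2
  rwa [IntegrableOn, ← Measure.restrict_congr_set Ioo_ae_eq_Ioc]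

lemma norm_sq_eq (g : X) :
    ∫ t in Ioc (0:ℝ) 1, ‖(g : ℝ → ℂ) t‖ ^ 2 = ‖g‖ ^ 2 := by
  have h2 : (inner ℂ g g : ℂ) = ∫ t, (inner ℂ ((g : ℝ → ℂ) t) ((g : ℝ → ℂ) t) : ℂ) ∂μ1 :=
    L2.inner_def g g
  have h3 : ∀ t : ℝ, (inner ℂ ((g : ℝ → ℂ) t) ((g : ℝ → ℂ) t) : ℂ)
      = ((‖(g : ℝ → ℂ) t‖ ^ 2 : ℝ) : ℂ) := fun t => by
    rw [inner_self_eq_norm_sq_to_K]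
    norm_cast
  have h4 : (inner ℂ g g : ℂ) = ((∫ t, ‖(g : ℝ → ℂ) t‖ ^ 2 ∂μ1 : ℝ) : ℂ) := by
    rw [h2]
    simp_rw [h3]
    exact integral_ofReal
  have h5 : ∫ t, ‖(g : ℝ → ℂ) t‖ ^ 2 ∂μ1 = ‖g‖ ^ 2 := by
    have := @inner_self_eq_norm_sq ℂ _ _ _ _ g
    rw [h4] at this
    simpa using this
  rw [← h5]
  exact (setIntegral_congr_set Ioo_ae_eq_Ioc).symm

lemma isCompact_Par : IsCompact Par := by
  have hclosed : IsClosed Par := by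
    have : Par = {p : ℝ × ℝ | 0 ≤ p.2} ∩ ({p | p.2 ≤ 1} ∩ ({p | p.2 ≤ p.1} ∩ {p | p.1 ≤ p.2 + 1})) := by
      ext p
      simp [Par, and_assoc]
    rw [this]
    exact (isClosed_le continuous_const continuous_snd).inter
      ((isClosed_le continuous_snd continuous_const).inter
        ((isClosed_le continuous_snd continuous_fst).inter
          (isClosed_le continuous_fst (continuous_snd.add continuous_const))))
  refine (isCompact_Icc (a := ((0:ℝ), (0:ℝ))) (b := ((2:ℝ), (1:ℝ)))).of_isClosed_subset hclosed ?_
  rintro p ⟨h1, h2, h3, h4⟩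
  simp only [Set.mem_Icc, Prod.le_def]
  exact ⟨⟨by linarith, by linarith⟩, by linarith, by linarith⟩

end AutoconvAux

open AutoconvAux

/-- The kernel-based autoconvolution operator `F : X → Y` is Fréchet
differentiable at every `f ∈ X`, with derivative `F'(f)` given by
`[F'(f)h](s) = 2 ∫ k(s,τ) f(s−τ) h(τ) dτ`. -/
theorem stmt1 (k : ℝ × ℝ → ℂ) (hk_cont : ContinuousOn k Par)
    (hk_supp : ∀ p, p ∉ Par → k p = 0)
    (hk_symm : ∀ p ∈ Par, k p = k (p.1, p.1 - p.2))
    (F : X → Y)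
    (hF : ∀ f : X, ∀ᵐ s ∂μ2,
      F f s = ∫ τ in (max (s - 1) 0)..(min s 1), k (s, τ) * f (s - τ) * f τ)
    (DF : X → (X →L[ℂ] Y))
    (hDF : ∀ f h : X, ∀ᵐ s ∂μ2,
      DF f h s = 2 * ∫ τ in (max (s - 1) 0)..(min s 1), k (s, τ) * f (s - τ) * h τ) :
    ∀ f : X, HasFDerivAt F (DF f) f := by
  intro f
  obtain ⟨M₀, hM₀⟩ := isCompact_Par.exists_bound_of_continuousOn hk_cont
  set M := max M₀ 0 with hMdef
  have hM0 : 0 ≤ M := le_max_right _ _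
  have hMk : ∀ p, ‖k p‖ ≤ M := fun p => by
    by_cases hp : p ∈ Par
    · exact (hM₀ p hp).trans (le_max_left _ _)
    · rw [hk_supp p hp]; simpa using hM0
  haveI : IsFiniteMeasure μ2 := by
    constructor
    rw [Measure.restrict_apply_univ]
    simp [Real.volume_Ioo]
  set c : ℝ := (measureUnivNNReal μ2 : ℝ) ^ ((2:ℝ≥0∞).toReal)⁻¹ * M with hc
  have key : ∀ h : X, ‖F (f + h) - F f - (DF f) h‖ ≤ c * ‖h‖ ^ 2 := by
    intro h
    have hf2 := int_sq_of_Lp f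
    have hh2 := int_sq_of_Lp h
    have hfm := Lp.stronglyMeasurable f
    have hhm := Lp.stronglyMeasurable h
    have hBound : ∀ᵐ s ∂μ2, ‖(F (f + h) - F f - (DF f) h : Y) s‖ ≤ M * ‖h‖ ^ 2 := by
      have hc1 := Lp.coeFn_sub (F (f + h) - F f) ((DF f) h)
      have hc2 := Lp.coeFn_sub (F (f + h)) (F f)
      have hadd : (⇑(f + h) : ℝ → ℂ) =ᵐ[volume.restrict (Ioo (0:ℝ) 1)]
          (fun t => (f : ℝ → ℂ) t + (h : ℝ → ℂ) t) := Lp.coeFn_add f h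
      have hmem : ∀ᵐ s ∂μ2, s ∈ Ioo (0:ℝ) 2 := ae_restrict_mem measurableSet_Ioo
      filter_upwards [hF (f + h), hF f, hDF f h, hc1, hc2, hmem] with s h1 h2 h3 h4 h5 hs
      have hs0 : (0:ℝ) ≤ s := hs.1.le
      have hs2' : s ≤ 2 := hs.2.le
      have hval : (F (f + h) - F f - (DF f) h : Y) s = Q k (⇑h) (⇑h) s := by
        rw [h4, Pi.sub_apply, h5, Pi.sub_apply, h1, h2, h3]
        show Q k (⇑(f + h)) (⇑(f + h)) s - Q k (⇑f) (⇑f) s - 2 * Q k (⇑f) (⇑h) s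
          = Q k (⇑h) (⇑h) s
        rw [Q_congr hs0 hs2' hadd hadd k,
          Q_add hMk hk_cont hs0 hs2' hfm hhm hf2 hh2,
          Q_symm hk_supp hk_symm (⇑h) (⇑f) s]
        ring
      rw [hval]
      calc ‖Q k (⇑h) (⇑h) s‖ ≤ M * ∫ t in Ioc (0:ℝ) 1, ‖(h : ℝ → ℂ) t‖ ^ 2 :=
            Q_bound hMk hM0 hk_cont hs0 hs2' hhm hh2
      _ = M * ‖h‖ ^ 2 := by rw [norm_sq_eq]
    have hle := Lp.norm_le_of_ae_bound (f := F (f + h) - F f - (DF f) h)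
      (by positivity : (0:ℝ) ≤ M * ‖h‖ ^ 2) hBound
    calc ‖F (f + h) - F f - (DF f) h‖
        ≤ (measureUnivNNReal μ2 : ℝ) ^ ((2:ℝ≥0∞).toReal)⁻¹ * (M * ‖h‖ ^ 2) := hle
    _ = c * ‖h‖ ^ 2 := by rw [hc]; ring
  rw [hasFDerivAt_iff_isLittleO_nhds_zero]
  refine Asymptotics.IsBigO.trans_isLittleO ?_
    (Asymptotics.isLittleO_norm_pow_id (E' := X) one_lt_two)
  refine Asymptotics.IsBigO.of_bound c (Eventually.of_forall fun h => ?_)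
  calc ‖F (f + h) - F f - (DF f) h‖ ≤ c * ‖h‖ ^ 2 := key h
  _ = c * ‖‖h‖ ^ 2‖ := by rw [Real.norm_of_nonneg (by positivity)]
end
end

section
/- With k̄ := max_{(s,τ)∈𝔓} |k(s,τ)|, the kernel-based autoconvolution operator satisfies the nonlinearity (Lipschitz-type) condition ‖F(f+h) − F(f) − F'(f)h‖_Y ≤ k̄ ‖h‖²_X for all f, h ∈ X. -/
open MeasureTheory Complex Set Filter Topology
open scoped ENNReal

noncomputable section

/- ### Auxiliary lemmas -/

private lemma int_mul_L2 {μ : Measure ℝ} (f g : ℝ → ℂ) (hf : MemLp f 2 μ) (hg : MemLp g 2 μ) :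
    Integrable (fun x => f x * g x) μ := by
  have h12 : (1:ℝ≥0∞)/1 = 1/2 + 1/2 := by
    rw [one_div_one, ENNReal.div_add_div_same, one_add_one_eq_two]
    exact (ENNReal.div_self two_ne_zero ENNReal.ofNat_ne_top).symm
  have h := hf.smul (r := 1) hg
  rw [memLp_one_iff_integrable] at h
  exact h.congr (by filter_upwards with x; simp [smul_eq_mul, mul_comm])

private lemma eLpNorm_two (f : ℝ → ℂ) (μ : Measure ℝ) :
    eLpNorm f 2 μ = (∫⁻ x, (‖f x‖₊ : ℝ≥0∞) ^ (2:ℝ) ∂μ) ^ (1/(2:ℝ)) := by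
  rw [eLpNorm_eq_lintegral_rpow_enorm_toReal (by norm_num) (by norm_num)]
  simp only [enorm_eq_nnnorm]
  norm_num

private lemma rpow_two' (x : ℝ≥0∞) : x ^ (2:ℝ) = x * x := by
  rw [show (2:ℝ) = ((2:ℕ):ℝ) by norm_num, ENNReal.rpow_natCast, pow_two]

private lemma par_mem_iff (s τ : ℝ) : (s, τ) ∈ Par ↔ max (s-1) 0 ≤ τ ∧ τ ≤ min s 1 := by
  simp only [Par, Set.mem_setOf_eq, max_le_iff, le_min_iff]
  constructor
  · rintro ⟨h1, h2, h3, h4⟩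
    exact ⟨⟨by linarith, h1⟩, h3, h2⟩
  · rintro ⟨⟨h1, h2⟩, h3, h4⟩
    exact ⟨h2, h4, h3, by linarith⟩

private lemma rep_lintegral (x : X) :
    (∫⁻ u, (‖(Ioo (0:ℝ) 1).indicator ((Lp.aestronglyMeasurable x).mk x) u‖₊ : ℝ≥0∞) ^ (2:ℝ)
      ∂(volume : Measure ℝ)) = ∫⁻ u, (‖x u‖₊ : ℝ≥0∞) ^ (2:ℝ) ∂μ1 := by
  have hpt : ∀ u, (‖(Ioo (0:ℝ) 1).indicator ((Lp.aestronglyMeasurable x).mk x) u‖₊ : ℝ≥0∞) ^ (2:ℝ)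
      = (Ioo (0:ℝ) 1).indicator
          (fun u => (‖(Lp.aestronglyMeasurable x).mk x u‖₊ : ℝ≥0∞) ^ (2:ℝ)) u := by
    intro u; by_cases hu : u ∈ Ioo (0:ℝ) 1
    · simp [hu]
    · simp [hu, ENNReal.rpow_eq_zero_iff]
  rw [lintegral_congr hpt, lintegral_indicator measurableSet_Ioo]
  refine lintegral_congr_ae ?_
  filter_upwards [(Lp.aestronglyMeasurable x).ae_eq_mk] with u hu
  rw [hu]

private lemma exists_rep (x : X) : ∃ g : ℝ → ℂ, StronglyMeasurable g ∧
    (∀ u, u ∉ Ioo (0:ℝ) 1 → g u = 0) ∧ (⇑x =ᵐ[μ1] g) ∧ MemLp g 2 (volume : Measure ℝ) ∧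
    (∫⁻ u, (‖g u‖₊ : ℝ≥0∞) ^ (2:ℝ) ∂(volume : Measure ℝ))
      = ∫⁻ u, (‖x u‖₊ : ℝ≥0∞) ^ (2:ℝ) ∂μ1 := by
  set m : ℝ → ℂ := (Lp.aestronglyMeasurable x).mk x with hm
  refine ⟨(Ioo (0:ℝ) 1).indicator m,
    ((Lp.aestronglyMeasurable x).stronglyMeasurable_mk).indicator measurableSet_Ioo,
    fun u hu => Set.indicator_of_notMem hu _, ?_, ?_, ?_⟩
  case _ =>
    refine ((Lp.aestronglyMeasurable x).ae_eq_mk).trans ?_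
    filter_upwards [ae_restrict_mem measurableSet_Ioo] with u hu
    exact (Set.indicator_of_mem hu _).symm
  case _ =>
    refine ⟨(((Lp.aestronglyMeasurable x).stronglyMeasurable_mk).indicator
      measurableSet_Ioo).aestronglyMeasurable, ?_⟩
    rw [eLpNorm_two]
    rw [show ((Lp.aestronglyMeasurable x).mk x) = m from rfl] at *
    rw [hm, rep_lintegral x]
    have h2 := (Lp.memLp x).2
    rw [eLpNorm_two] at h2
    exact h2
  case _ =>
    rw [hm]
    exact rep_lintegral x

/-- With `k̄ = max_{(s,τ)∈𝔓} |k(s,τ)|`, the autoconvolution operator satisfies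
the nonlinearity condition `‖F(f+h) − F(f) − F'(f)h‖_Y ≤ k̄ ‖h‖²_X` for all `f, h ∈ X`. -/
theorem stmt3 (k : ℝ × ℝ → ℂ) (hk_cont : ContinuousOn k Par)
    (hk_supp : ∀ p, p ∉ Par → k p = 0)
    (hk_symm : ∀ p ∈ Par, k p = k (p.1, p.1 - p.2))
    (F : X → Y)
    (hF : ∀ f : X, ∀ᵐ s ∂μ2,
      F f s = ∫ τ in (max (s - 1) 0)..(min s 1), k (s, τ) * f (s - τ) * f τ)
    (DF : X → (X →L[ℂ] Y))
    (hDF : ∀ f h : X, ∀ᵐ s ∂μ2,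
      DF f h s = 2 * ∫ τ in (max (s - 1) 0)..(min s 1), k (s, τ) * f (s - τ) * h τ)
    (kbar : ℝ) (hkbar : IsGreatest ((fun p => ‖k p‖) '' Par) kbar) :
    ∀ f h : X, ‖F (f + h) - F f - DF f h‖ ≤ kbar * ‖h‖ ^ 2 := by
  intro f h
  -- kernel facts
  have hkbar0 : 0 ≤ kbar := by
    obtain ⟨p, _, hpk⟩ := hkbar.1
    exact hpk ▸ (norm_nonneg _)
  have hkb : ∀ p : ℝ × ℝ, ‖k p‖ ≤ kbar := by
    intro p
    by_cases hp : p ∈ Par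
    · exact hkbar.2 ⟨p, hp, rfl⟩
    · rw [hk_supp p hp]; simpa using hkbar0
  have parrefl : ∀ s τ : ℝ, ((s, s - τ) ∈ Par ↔ (s, τ) ∈ Par) := by
    intro s τ
    rw [par_mem_iff, par_mem_iff]
    simp only [max_le_iff, le_min_iff]
    constructor
    · rintro ⟨⟨h1, h2⟩, h3, h4⟩
      exact ⟨⟨by linarith, by linarith⟩, by linarith, by linarith⟩
    · rintro ⟨⟨h1, h2⟩, h3, h4⟩
      exact ⟨⟨by linarith, by linarith⟩, by linarith, by linarith⟩
  have ksym : ∀ s τ : ℝ, k (s, τ) = k (s, s - τ) := by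
    intro s τ
    by_cases hp : (s, τ) ∈ Par
    · exact hk_symm (s, τ) hp
    · rw [hk_supp _ hp, hk_supp _ (fun c => hp ((parrefl s τ).1 c))]
  -- representatives
  obtain ⟨Fm, hFm_sm, hFm_supp, hFm_ae, hFm_mem, -⟩ := exists_rep f
  obtain ⟨H, hH_sm, hH_supp, hH_ae, hH_mem, hH_norm⟩ := exists_rep h
  have hfh_ae : ⇑(f + h) =ᵐ[μ1] fun u => Fm u + H u := (Lp.coeFn_add f h).trans (hFm_ae.add hH_ae)
  set G : Y := F (f + h) - F f - DF f h with hGdef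
  -- a.e. congruence events
  have congr_event : ∀ (x : X) (g : ℝ → ℂ), ⇑x =ᵐ[μ1] g →
      ∀ᵐ τ ∂(volume : Measure ℝ), τ ∈ Ioo (0:ℝ) 1 → x τ = g τ := by
    intro x g hxg
    exact (ae_restrict_iff' measurableSet_Ioo).1 hxg
  have refl_event : ∀ (s : ℝ) (p : ℝ → Prop), (∀ᵐ u ∂(volume : Measure ℝ), p u) →
      ∀ᵐ τ ∂(volume : Measure ℝ), p (s - τ) := by
    intro s p hp
    exact (Measure.measurePreserving_sub_left volume s).quasiMeasurePreserving.ae hp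
  have e1 := congr_event f Fm hFm_ae
  have e2 := congr_event h H hH_ae
  have e3 := congr_event (f + h) _ hfh_ae
  have hfhsupp : ∀ u, u ∉ Ioo (0:ℝ) 1 → Fm u + H u = 0 := fun u hu => by
    rw [hFm_supp u hu, hH_supp u hu, add_zero]
  -- the main a.e. identity
  have hG : ∀ᵐ s ∂μ2, (G : ℝ → ℂ) s
      = ∫ τ, k (s, τ) * H (s - τ) * H τ ∂(volume : Measure ℝ) := by
    have sub1 : ⇑G =ᵐ[μ2] ⇑(F (f + h) - F f) - ⇑(DF f h) := Lp.coeFn_sub _ _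
    have sub2 : ⇑(F (f + h) - F f) =ᵐ[μ2] ⇑(F (f + h)) - ⇑(F f) := Lp.coeFn_sub _ _
    filter_upwards [hF (f + h), hF f, hDF f h, sub1, sub2, ae_restrict_mem measurableSet_Ioo]
      with s h1 h2 h3 h4 h5 hs
    obtain ⟨hs0, hs2⟩ := hs
    have ha0 : (0:ℝ) ≤ max (s - 1) 0 := le_max_right _ _
    have ha1 : s - 1 ≤ max (s - 1) 0 := le_max_left _ _
    have hb0 : min s 1 ≤ s := min_le_left _ _
    have hb1 : min s 1 ≤ 1 := min_le_right _ _
    have hab : max (s - 1) 0 ≤ min s 1 :=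
      max_le (le_min (by linarith) (by linarith)) (le_min (by linarith) (by linarith))
    -- fixed-s kernel slice measurability
    have ksmeas : AEStronglyMeasurable (fun τ => k (s, τ)) (volume : Measure ℝ) := by
      have hcont : ContinuousOn (fun τ => k (s, τ)) (Icc (max (s-1) 0) (min s 1)) := by
        refine hk_cont.comp (Continuous.continuousOn (continuous_const.prodMk continuous_id)) ?_
        intro τ hτ
        exact (par_mem_iff s τ).2 ⟨hτ.1, hτ.2⟩
      have heq : (fun τ => k (s, τ))
          = (Icc (max (s-1) 0) (min s 1)).indicator (fun τ => k (s, τ)) := by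
        funext τ
        by_cases hτ : τ ∈ Icc (max (s-1) 0) (min s 1)
        · rw [Set.indicator_of_mem hτ]
        · rw [Set.indicator_of_notMem hτ, hk_supp]
          intro hmem
          exact hτ ((par_mem_iff s τ).1 hmem)
      rw [heq]
      exact (aestronglyMeasurable_indicator_iff measurableSet_Icc).2
        (hcont.aestronglyMeasurable measurableSet_Icc)
    have ksbd : ∀ᵐ τ ∂(volume : Measure ℝ), ‖k (s, τ)‖ ≤ kbar :=
      ae_of_all _ fun τ => by exact hkb (s, τ)
    have integ : ∀ (gx gy : ℝ → ℂ), MemLp gx 2 (volume : Measure ℝ) →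
        MemLp gy 2 (volume : Measure ℝ) →
        Integrable (fun τ => k (s, τ) * gx (s - τ) * gy τ) (volume : Measure ℝ) := by
      intro gx gy hgx hgy
      have h1' : Integrable (fun τ => gx (s - τ) * gy τ) (volume : Measure ℝ) :=
        int_mul_L2 _ _ (hgx.comp_measurePreserving (Measure.measurePreserving_sub_left volume s))
          hgy
      exact (h1'.bdd_mul ksmeas ksbd).congr (ae_of_all _ fun τ => by ring)
    -- interval integral to full-line integral
    have key : ∀ (x y : X) (gx gy : ℝ → ℂ),
        (∀ᵐ τ ∂(volume : Measure ℝ), τ ∈ Ioo (0:ℝ) 1 → x τ = gx τ) →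
        (∀ u, u ∉ Ioo (0:ℝ) 1 → gx u = 0) →
        (∀ᵐ τ ∂(volume : Measure ℝ), τ ∈ Ioo (0:ℝ) 1 → y τ = gy τ) →
        (∀ u, u ∉ Ioo (0:ℝ) 1 → gy u = 0) →
        ∫ τ in (max (s - 1) 0)..(min s 1), k (s, τ) * x (s - τ) * y τ
          = ∫ τ, k (s, τ) * gx (s - τ) * gy τ ∂(volume : Measure ℝ) := by
      intro x y gx gy hx hxs hy hys
      rw [intervalIntegral.integral_of_le hab]
      have hcongr : ∫ τ in Ioc (max (s-1) 0) (min s 1), k (s, τ) * x (s - τ) * y τ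
          = ∫ τ in Ioc (max (s-1) 0) (min s 1), k (s, τ) * gx (s - τ) * gy τ := by
        refine setIntegral_congr_ae measurableSet_Ioc ?_
        have hne1 : ∀ᵐ τ : ℝ ∂volume, τ ≠ 1 := by
          refine ae_iff.2 ?_
          simp only [ne_eq, not_not, setOf_eq_eq_singleton]
          exact measure_singleton (1:ℝ)
        have hnes : ∀ᵐ τ : ℝ ∂volume, τ ≠ s := by
          refine ae_iff.2 ?_
          simp only [ne_eq, not_not, setOf_eq_eq_singleton]
          exact measure_singleton s
        filter_upwards [hy, refl_event s _ hx, hne1, hnes] with τ hyτ hxτ hτ1 hτs hmem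
        have h0τ : 0 < τ := lt_of_le_of_lt (le_max_right _ _) hmem.1
        have hτ1' : τ < 1 := lt_of_le_of_ne (hmem.2.trans hb1) hτ1
        have hsτ0 : 0 < s - τ := sub_pos.2 (lt_of_le_of_ne (hmem.2.trans hb0) hτs)
        have hsτ1 : s - τ < 1 := by
          have := lt_of_le_of_lt ha1 hmem.1
          linarith
        rw [hyτ ⟨h0τ, hτ1'⟩, hxτ ⟨hsτ0, hsτ1⟩]
      rw [hcongr]
      refine setIntegral_eq_integral_of_forall_compl_eq_zero ?_
      intro τ hτ
      have hcases : τ ≤ max (s-1) 0 ∨ min s 1 < τ := by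
        by_contra hc
        push_neg at hc
        exact hτ ⟨hc.1, hc.2⟩
      have hz : gx (s - τ) = 0 ∨ gy τ = 0 := by
        rcases hcases with hle | hgt
        · rcases le_total (s - 1) 0 with hc | hc
          · right
            refine hys τ fun hmem => ?_
            rw [max_eq_right hc] at hle
            exact absurd hmem.1 (not_lt.2 hle)
          · left
            refine hxs _ fun hmem => ?_
            rw [max_eq_left hc] at hle
            have : s - τ ≥ 1 := by linarith
            exact absurd hmem.2 (not_lt.2 this)
        · rcases le_total s 1 with hc | hc
          · left
            refine hxs _ fun hmem => ?_
            rw [min_eq_left hc] at hgt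
            have : s - τ < 0 := by linarith
            exact absurd hmem.1 (not_lt.2 this.le)
          · right
            refine hys τ fun hmem => ?_
            rw [min_eq_right hc] at hgt
            exact absurd hmem.2 (not_lt.2 hgt.le)
      rcases hz with hz | hz <;> rw [hz] <;> ring
    -- expand the square
    have memfh : MemLp (fun u => Fm u + H u) 2 (volume : Measure ℝ) := hFm_mem.add hH_mem
    have iFF := integ Fm Fm hFm_mem hFm_mem
    have iFH := integ Fm H hFm_mem hH_mem
    have iHF := integ H Fm hH_mem hFm_mem
    have iHH := integ H H hH_mem hH_mem
    have expand : ∫ τ, k (s, τ) * (Fm (s - τ) + H (s - τ)) * (Fm τ + H τ) ∂(volume : Measure ℝ)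
        = (∫ τ, k (s, τ) * Fm (s - τ) * Fm τ ∂(volume : Measure ℝ))
          + (∫ τ, k (s, τ) * Fm (s - τ) * H τ ∂(volume : Measure ℝ))
          + (∫ τ, k (s, τ) * H (s - τ) * Fm τ ∂(volume : Measure ℝ))
          + (∫ τ, k (s, τ) * H (s - τ) * H τ ∂(volume : Measure ℝ)) := by
      have hfun : (fun τ => k (s, τ) * (Fm (s - τ) + H (s - τ)) * (Fm τ + H τ))
          = fun τ => (k (s, τ) * Fm (s - τ) * Fm τ + k (s, τ) * Fm (s - τ) * H τ)
            + (k (s, τ) * H (s - τ) * Fm τ + k (s, τ) * H (s - τ) * H τ) :=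
        funext fun τ => by ring
      have i12 : Integrable (fun τ => k (s, τ) * Fm (s - τ) * Fm τ
          + k (s, τ) * Fm (s - τ) * H τ) (volume : Measure ℝ) := iFF.add iFH
      have i34 : Integrable (fun τ => k (s, τ) * H (s - τ) * Fm τ
          + k (s, τ) * H (s - τ) * H τ) (volume : Measure ℝ) := iHF.add iHH
      rw [hfun]
      calc ∫ τ, ((k (s, τ) * Fm (s - τ) * Fm τ + k (s, τ) * Fm (s - τ) * H τ)
              + (k (s, τ) * H (s - τ) * Fm τ + k (s, τ) * H (s - τ) * H τ)) ∂(volume : Measure ℝ)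
          = (∫ τ, (k (s, τ) * Fm (s - τ) * Fm τ + k (s, τ) * Fm (s - τ) * H τ)
              ∂(volume : Measure ℝ))
            + ∫ τ, (k (s, τ) * H (s - τ) * Fm τ + k (s, τ) * H (s - τ) * H τ)
              ∂(volume : Measure ℝ) := integral_add i12 i34
        _ = ((∫ τ, k (s, τ) * Fm (s - τ) * Fm τ ∂(volume : Measure ℝ))
              + ∫ τ, k (s, τ) * Fm (s - τ) * H τ ∂(volume : Measure ℝ))
            + ((∫ τ, k (s, τ) * H (s - τ) * Fm τ ∂(volume : Measure ℝ))
              + ∫ τ, k (s, τ) * H (s - τ) * H τ ∂(volume : Measure ℝ)) := by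
            rw [integral_add iFF iFH, integral_add iHF iHH]
        _ = _ := by ring
    -- symmetry
    have symm : ∫ τ, k (s, τ) * H (s - τ) * Fm τ ∂(volume : Measure ℝ)
        = ∫ τ, k (s, τ) * Fm (s - τ) * H τ ∂(volume : Measure ℝ) := by
      have hptw : ∀ u : ℝ, k (s, u) * Fm (s - u) * H u
          = (fun τ => k (s, τ) * H (s - τ) * Fm τ) (s - u) := by
        intro u
        simp only [sub_sub_cancel]
        rw [← ksym s u]
        ring
      rw [← integral_sub_left_eq_self (fun τ => k (s, τ) * H (s - τ) * Fm τ) volume s]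
      exact (integral_congr_ae (ae_of_all _ hptw)).symm
    -- put together
    have hGs : (G : ℝ → ℂ) s = F (f + h) s - F f s - DF f h s := by
      rw [h4, Pi.sub_apply, h5, Pi.sub_apply]
    rw [hGs, h1, h2, h3,
      key (f + h) (f + h) _ _ e3 hfhsupp e3 hfhsupp,
      key f f Fm Fm e1 hFm_supp e1 hFm_supp,
      key f h Fm H e1 hFm_supp e2 hH_supp,
      expand, symm]
    ring
  -- ### Step B : pointwise bound on the defect
  have meas_Hnn : Measurable fun u : ℝ => (‖H u‖₊ : ℝ≥0∞) :=
    hH_sm.measurable.nnnorm.coe_nnreal_ennreal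
  have meas_Hsq : Measurable fun u : ℝ => (‖H u‖₊ : ℝ≥0∞) ^ (2:ℝ) := meas_Hnn.pow_const _
  set Kb : ℝ≥0∞ := ENNReal.ofReal kbar with hKb
  have Kbne : Kb ≠ ⊤ := ENNReal.ofReal_ne_top
  set T : ℝ≥0∞ := ∫⁻ u, (‖H u‖₊ : ℝ≥0∞) ^ (2:ℝ) ∂(volume : Measure ℝ) with hT
  set Φ : ℝ → ℝ≥0∞ :=
    fun s => ∫⁻ u in Ioo (s-1) s, (‖H u‖₊ : ℝ≥0∞) ^ (2:ℝ) ∂(volume : Measure ℝ) with hΦ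
  have hΦT : ∀ s, Φ s ≤ T := fun s => setLIntegral_le_lintegral _ _
  have hTne : T ≠ ⊤ := by
    have h2 := hH_mem.2
    rw [eLpNorm_two, ← hT] at h2
    exact ((ENNReal.rpow_lt_top_iff_of_pos (by norm_num : (0:ℝ) < 1/2)).1 h2).ne
  have hGb : ∀ᵐ s ∂μ2, (‖(G : ℝ → ℂ) s‖₊ : ℝ≥0∞) ≤ Kb * Φ s := by
    filter_upwards [hG] with s hGs
    rw [hGs]
    set S : Set ℝ := Ioo (0:ℝ) 1 ∩ Ioo (s-1) s with hSdef
    have hSm : MeasurableSet S := measurableSet_Ioo.inter measurableSet_Ioo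
    have pt : ∀ τ, (‖k (s, τ) * H (s - τ) * H τ‖₊ : ℝ≥0∞)
        ≤ Kb * S.indicator (fun τ => (‖H (s - τ)‖₊ : ℝ≥0∞) * (‖H τ‖₊ : ℝ≥0∞)) τ := by
      intro τ
      by_cases hτ : τ ∈ S
      · rw [Set.indicator_of_mem hτ]
        have hk1 : (‖k (s, τ)‖₊ : ℝ≥0∞) ≤ Kb := by
          rw [← ENNReal.ofReal_coe_nnreal, coe_nnnorm]
          exact ENNReal.ofReal_le_ofReal (by exact hkb (s, τ))
        calc (‖k (s, τ) * H (s - τ) * H τ‖₊ : ℝ≥0∞)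
            = (‖k (s, τ)‖₊ : ℝ≥0∞) * ((‖H (s - τ)‖₊ : ℝ≥0∞) * (‖H τ‖₊ : ℝ≥0∞)) := by
              rw [nnnorm_mul, nnnorm_mul]; push_cast; ring
          _ ≤ Kb * ((‖H (s - τ)‖₊ : ℝ≥0∞) * (‖H τ‖₊ : ℝ≥0∞)) := mul_le_mul_left hk1 _
      · rw [Set.indicator_of_notMem hτ, mul_zero]
        have hz : H (s - τ) = 0 ∨ H τ = 0 := by
          by_cases h1 : τ ∈ Ioo (0:ℝ) 1
          · left
            refine hH_supp _ fun hc => ?_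
            exact hτ ⟨h1, ⟨by linarith [hc.2], by linarith [hc.1]⟩⟩
          · right; exact hH_supp τ h1
        rcases hz with h0 | h0 <;> simp [h0]
    calc (‖∫ τ, k (s, τ) * H (s - τ) * H τ ∂(volume : Measure ℝ)‖₊ : ℝ≥0∞)
        ≤ ∫⁻ τ, ‖k (s, τ) * H (s - τ) * H τ‖₊ ∂(volume : Measure ℝ) :=
          enorm_integral_le_lintegral_enorm _
      _ ≤ ∫⁻ τ, Kb * S.indicator (fun τ => (‖H (s - τ)‖₊ : ℝ≥0∞) * (‖H τ‖₊ : ℝ≥0∞)) τ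
            ∂(volume : Measure ℝ) := lintegral_mono pt
      _ = Kb * ∫⁻ τ in S, (‖H (s - τ)‖₊ : ℝ≥0∞) * (‖H τ‖₊ : ℝ≥0∞) ∂(volume : Measure ℝ) := by
          rw [lintegral_const_mul' _ _ Kbne, lintegral_indicator hSm]
      _ ≤ Kb * Φ s := by
          refine mul_le_mul_right ?_ _
          have measRefl : Measurable fun τ : ℝ => (‖H (s - τ)‖₊ : ℝ≥0∞) :=
            meas_Hnn.comp (measurable_const.sub measurable_id)
          have hH2 := ENNReal.lintegral_mul_le_Lp_mul_Lq ((volume : Measure ℝ).restrict S)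
            (Real.holderConjugate_iff.mpr ⟨by norm_num, by norm_num⟩ : Real.HolderConjugate 2 2)
            (f := fun τ => (‖H (s - τ)‖₊ : ℝ≥0∞)) (g := fun τ => (‖H τ‖₊ : ℝ≥0∞))
            measRefl.aemeasurable meas_Hnn.aemeasurable
          simp only [Pi.mul_apply] at hH2
          refine hH2.trans ?_
          have f2 : ∫⁻ τ in S, (‖H τ‖₊ : ℝ≥0∞) ^ (2:ℝ) ∂(volume : Measure ℝ) ≤ Φ s :=
            lintegral_mono_set inter_subset_right
          have f1 : ∫⁻ τ in S, (‖H (s - τ)‖₊ : ℝ≥0∞) ^ (2:ℝ) ∂(volume : Measure ℝ) ≤ Φ s := by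
            refine le_trans (lintegral_mono_set inter_subset_left) (le_of_eq ?_)
            have hptw : ∀ τ, (Ioo (0:ℝ) 1).indicator
                (fun τ => (‖H (s - τ)‖₊ : ℝ≥0∞) ^ (2:ℝ)) τ
                = (Ioo (s-1) s).indicator (fun u => (‖H u‖₊ : ℝ≥0∞) ^ (2:ℝ)) (s - τ) := by
              intro τ
              by_cases hτ : τ ∈ Ioo (0:ℝ) 1
              · have h2 : s - τ ∈ Ioo (s-1) s := ⟨by linarith [hτ.2], by linarith [hτ.1]⟩
                rw [Set.indicator_of_mem hτ, Set.indicator_of_mem h2]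
              · have h2 : s - τ ∉ Ioo (s-1) s := fun hc => hτ ⟨by linarith [hc.2],
                  by linarith [hc.1]⟩
                rw [Set.indicator_of_notMem hτ, Set.indicator_of_notMem h2]
            have hcomp := (Measure.measurePreserving_sub_left volume s).lintegral_comp
              (f := (Ioo (s-1) s).indicator fun u => (‖H u‖₊ : ℝ≥0∞) ^ (2:ℝ))
              (meas_Hsq.indicator measurableSet_Ioo)
            calc ∫⁻ τ in Ioo (0:ℝ) 1, (‖H (s - τ)‖₊ : ℝ≥0∞) ^ (2:ℝ) ∂(volume : Measure ℝ)
                = ∫⁻ τ, (Ioo (0:ℝ) 1).indicator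
                    (fun τ => (‖H (s - τ)‖₊ : ℝ≥0∞) ^ (2:ℝ)) τ ∂(volume : Measure ℝ) :=
                  (lintegral_indicator measurableSet_Ioo _).symm
              _ = ∫⁻ τ, (Ioo (s-1) s).indicator
                    (fun u => (‖H u‖₊ : ℝ≥0∞) ^ (2:ℝ)) (s - τ) ∂(volume : Measure ℝ) :=
                  lintegral_congr hptw
              _ = ∫⁻ u, (Ioo (s-1) s).indicator
                    (fun u => (‖H u‖₊ : ℝ≥0∞) ^ (2:ℝ)) u ∂(volume : Measure ℝ) := hcomp
              _ = Φ s := lintegral_indicator measurableSet_Ioo _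
          calc (∫⁻ τ in S, (‖H (s - τ)‖₊ : ℝ≥0∞) ^ (2:ℝ) ∂(volume : Measure ℝ)) ^ (1/(2:ℝ))
                * (∫⁻ τ in S, (‖H τ‖₊ : ℝ≥0∞) ^ (2:ℝ) ∂(volume : Measure ℝ)) ^ (1/(2:ℝ))
              ≤ Φ s ^ (1/(2:ℝ)) * Φ s ^ (1/(2:ℝ)) :=
                mul_le_mul' (ENNReal.rpow_le_rpow f1 (by norm_num))
                  (ENNReal.rpow_le_rpow f2 (by norm_num))
            _ = Φ s := by
                rw [← ENNReal.rpow_add_of_nonneg _ _ (by norm_num) (by norm_num)]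
                norm_num
  -- ### Step C : Tonelli and assembly
  set W : ℝ × ℝ → ℝ≥0∞ := fun q => Set.indicator {q : ℝ × ℝ | q.1 - 1 < q.2 ∧ q.2 < q.1}
    (fun q => (‖H q.2‖₊ : ℝ≥0∞) ^ (2:ℝ)) q with hWdef
  have meas_W : Measurable W := by
    refine Measurable.indicator (meas_Hsq.comp measurable_snd) ?_
    rw [Set.setOf_and]
    exact (measurableSet_lt (measurable_fst.sub measurable_const) measurable_snd).inter
      (measurableSet_lt measurable_snd measurable_fst)
  have hPhi_int : ∫⁻ s, Φ s ∂(volume : Measure ℝ) = T := by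
    have hW : ∀ s : ℝ, Φ s = ∫⁻ u, W (s, u) ∂(volume : Measure ℝ) := by
      intro s
      show (∫⁻ u in Ioo (s-1) s, (‖H u‖₊ : ℝ≥0∞) ^ (2:ℝ) ∂(volume : Measure ℝ)) = _
      rw [← lintegral_indicator measurableSet_Ioo]
      refine lintegral_congr fun u => ?_
      simp only [hWdef]
      by_cases hu : u ∈ Ioo (s-1) s
      · rw [Set.indicator_of_mem hu,
          Set.indicator_of_mem (show (s, u) ∈ {q : ℝ × ℝ | q.1 - 1 < q.2 ∧ q.2 < q.1}
            from ⟨hu.1, hu.2⟩)]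
      · rw [Set.indicator_of_notMem hu,
          Set.indicator_of_notMem (show (s, u) ∉ {q : ℝ × ℝ | q.1 - 1 < q.2 ∧ q.2 < q.1}
            from fun hc => hu ⟨hc.1, hc.2⟩)]
    calc ∫⁻ s, Φ s ∂(volume : Measure ℝ)
        = ∫⁻ s, ∫⁻ u, W (s, u) ∂(volume : Measure ℝ) ∂(volume : Measure ℝ) :=
          lintegral_congr hW
      _ = ∫⁻ u, ∫⁻ s, W (s, u) ∂(volume : Measure ℝ) ∂(volume : Measure ℝ) :=
          lintegral_lintegral_swap meas_W.aemeasurable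
      _ = ∫⁻ u, (‖H u‖₊ : ℝ≥0∞) ^ (2:ℝ) ∂(volume : Measure ℝ) := by
          refine lintegral_congr fun u => ?_
          have hptw : ∀ s : ℝ, W (s, u)
              = (Ioo u (u+1)).indicator (fun _ => (‖H u‖₊ : ℝ≥0∞) ^ (2:ℝ)) s := by
            intro s
            simp only [hWdef]
            by_cases hs : s ∈ Ioo u (u+1)
            · rw [Set.indicator_of_mem hs,
                Set.indicator_of_mem (show (s, u) ∈ {q : ℝ × ℝ | q.1 - 1 < q.2 ∧ q.2 < q.1}
                  from ⟨by linarith [hs.2], hs.1⟩)]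
            · rw [Set.indicator_of_notMem hs,
                Set.indicator_of_notMem (show (s, u) ∉ {q : ℝ × ℝ | q.1 - 1 < q.2 ∧ q.2 < q.1}
                  from fun hc => hs ⟨hc.2, by linarith [hc.1]⟩)]
          rw [lintegral_congr hptw, lintegral_indicator measurableSet_Ioo,
            setLIntegral_const, Real.volume_Ioo]
          simp
      _ = T := rfl
  have hsq : ∫⁻ s, (‖(G : ℝ → ℂ) s‖₊ : ℝ≥0∞) ^ (2:ℝ) ∂μ2 ≤ (Kb * T) * (Kb * T) := by
    have step1 : ∫⁻ s, (‖(G : ℝ → ℂ) s‖₊ : ℝ≥0∞) ^ (2:ℝ) ∂μ2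
        ≤ ∫⁻ s, (Kb * T) * (Kb * Φ s) ∂μ2 := by
      refine lintegral_mono_ae ?_
      filter_upwards [hGb] with s hs
      calc (‖(G : ℝ → ℂ) s‖₊ : ℝ≥0∞) ^ (2:ℝ)
          ≤ (Kb * Φ s) ^ (2:ℝ) := ENNReal.rpow_le_rpow hs (by norm_num)
        _ = (Kb * Φ s) * (Kb * Φ s) := rpow_two' _
        _ ≤ (Kb * T) * (Kb * Φ s) := mul_le_mul_left (mul_le_mul_right (hΦT s) _) _
    refine step1.trans ?_
    rw [lintegral_const_mul' _ _ (ENNReal.mul_ne_top Kbne hTne),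
      lintegral_const_mul' _ _ Kbne]
    refine mul_le_mul_right (mul_le_mul_right ?_ _) _
    exact le_trans (setLIntegral_le_lintegral _ _) (le_of_eq hPhi_int)
  have hnorm : eLpNorm (⇑G) 2 μ2 ≤ Kb * T := by
    rw [eLpNorm_two]
    calc (∫⁻ s, (‖(G : ℝ → ℂ) s‖₊ : ℝ≥0∞) ^ (2:ℝ) ∂μ2) ^ (1/(2:ℝ))
        ≤ ((Kb * T) * (Kb * T)) ^ (1/(2:ℝ)) := ENNReal.rpow_le_rpow hsq (by norm_num)
      _ = Kb * T := by
          rw [← rpow_two' (Kb * T), ← ENNReal.rpow_mul]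
          norm_num
  have hfinal : ‖G‖ ≤ (Kb * T).toReal := by
    rw [Lp.norm_def]
    exact ENNReal.toReal_mono (ENNReal.mul_ne_top Kbne hTne) hnorm
  refine hfinal.trans (le_of_eq ?_)
  have hhnorm : ‖h‖ = ((∫⁻ u, (‖h u‖₊ : ℝ≥0∞) ^ (2:ℝ) ∂μ1) ^ (1/(2:ℝ))).toReal := by
    rw [Lp.norm_def, eLpNorm_two]
  have hT2 : T.toReal = ‖h‖ ^ 2 := by
    rw [hH_norm, hhnorm, ← ENNReal.toReal_rpow,
      ← Real.rpow_natCast ((∫⁻ u, (‖h u‖₊ : ℝ≥0∞) ^ (2:ℝ) ∂μ1).toReal ^ (1/(2:ℝ))) 2,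
      ← Real.rpow_mul ENNReal.toReal_nonneg]
    norm_num [Real.rpow_one]
  rw [ENNReal.toReal_mul, hKb, ENNReal.toReal_ofReal hkbar0, hT2]
end
end

section
/- For every f ∈ X, the Hilbert-space adjoint F'(f)* : Y → X of the bounded linear operator F'(f) : X → Y is given explicitly by [F'(f)* r](τ) = 2 ∫_τ^{τ+1} conj(k(s,τ) f(s−τ)) r(s) ds for 0 ≤ τ ≤ 1 and r ∈ Y; that is, ⟨F'(f)h, r⟩_Y = ⟨h, F'(f)* r⟩_X for all h ∈ X, r ∈ Y. -/
open MeasureTheory Complex Set Filter Topology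
open scoped ENNReal

noncomputable section

lemma par_isClosed : IsClosed Par := by
  have h1 : IsClosed {p : ℝ × ℝ | 0 ≤ p.2} := isClosed_le continuous_const continuous_snd
  have h2 : IsClosed {p : ℝ × ℝ | p.2 ≤ 1} := isClosed_le continuous_snd continuous_const
  have h3 : IsClosed {p : ℝ × ℝ | p.2 ≤ p.1} := isClosed_le continuous_snd continuous_fst
  have h4 : IsClosed {p : ℝ × ℝ | p.1 ≤ p.2 + 1} :=
    isClosed_le continuous_fst (continuous_snd.add continuous_const)
  have : Par = {p : ℝ × ℝ | 0 ≤ p.2} ∩ ({p | p.2 ≤ 1} ∩ ({p | p.2 ≤ p.1} ∩ {p | p.1 ≤ p.2 + 1})) := by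
    ext p; simp [Par, and_assoc]
  rw [this]
  exact h1.inter (h2.inter (h3.inter h4))

lemma par_isCompact : IsCompact Par := by
  apply Metric.isCompact_of_isClosed_isBounded par_isClosed
  have hsub : Par ⊆ (Set.Icc (0:ℝ) 2) ×ˢ (Set.Icc (0:ℝ) 1) := by
    rintro ⟨s, τ⟩ ⟨h1, h2, h3, h4⟩
    exact ⟨⟨by dsimp at *; linarith, by dsimp at *; linarith⟩, ⟨h1, h2⟩⟩
  exact (Bornology.IsBounded.prod (Metric.isBounded_Icc (0:ℝ) 2)
    (Metric.isBounded_Icc (0:ℝ) 1)).subset hsub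

lemma k_aesm (k : ℝ × ℝ → ℂ) (hk_cont : ContinuousOn k Par)
    (hk_supp : ∀ p, p ∉ Par → k p = 0) :
    AEStronglyMeasurable k ((volume : Measure ℝ).prod (volume : Measure ℝ)) := by
  have hPm : MeasurableSet Par := par_isClosed.measurableSet
  set ν : Measure (ℝ × ℝ) := (volume : Measure ℝ).prod (volume : Measure ℝ)
  have h1 : AEStronglyMeasurable k (ν.restrict Par) :=
    hk_cont.aestronglyMeasurable hPm
  have h2 : AEStronglyMeasurable k (ν.restrict Parᶜ) := by
    have h0 : k =ᵐ[ν.restrict Parᶜ] (fun _ => (0:ℂ)) := by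
      rw [Filter.EventuallyEq, ae_restrict_iff' hPm.compl]
      exact ae_of_all _ fun p hp => hk_supp p hp
    exact (aestronglyMeasurable_const (b := (0:ℂ))).congr h0.symm
  have := h1.add_measure h2
  rwa [Measure.restrict_add_restrict_compl hPm] at this

/-- Truncation of `f : X` to `(0,1)`, as a function on `ℝ`. -/
def indF (f : X) : ℝ → ℂ := (Set.Ioo (0:ℝ) 1).indicator ⇑f

/-- Truncation of `r : Y` to `(0,2)`, as a function on `ℝ`. -/
def indR (r : Y) : ℝ → ℂ := (Set.Ioo (0:ℝ) 2).indicator ⇑r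

/-- The joint integrand in the Fubini argument. -/
def gk (k : ℝ × ℝ → ℂ) (f h : X) (r : Y) (s τ : ℝ) : ℂ :=
  (starRingEnd ℂ) (k (s, τ) * indF f (s - τ) * indF h τ) * indR r s

lemma indF_memℒp (f : X) : MemLp (indF f) 2 (volume : Measure ℝ) :=
  (memLp_indicator_iff_restrict measurableSet_Ioo).2 (Lp.memLp f)

lemma indR_memℒp (r : Y) : MemLp (indR r) 2 (volume : Measure ℝ) :=
  (memLp_indicator_iff_restrict measurableSet_Ioo).2 (Lp.memLp r)

lemma indR_integrable (r : Y) : Integrable (indR r) (volume : Measure ℝ) := by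
  rw [indR, integrable_indicator_iff measurableSet_Ioo]
  have : IsFiniteMeasure μ2 := by
    constructor
    rw [Measure.restrict_apply_univ, Real.volume_Ioo]
    exact ENNReal.ofReal_lt_top
  exact memLp_one_iff_integrable.1
    ((Lp.memLp r).mono_exponent (by norm_num))

lemma sq_lintegral_lt_top {u : ℝ → ℂ} (hu : MemLp u 2 (volume : Measure ℝ)) :
    ∫⁻ x, (‖u x‖₊ : ℝ≥0∞) ^ (2:ℝ) ∂volume < ⊤ := by
  have h2 := hu.2
  rw [eLpNorm_eq_lintegral_rpow_enorm_toReal (by norm_num) (by norm_num)] at h2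
  simp only [ENNReal.toReal_ofNat] at h2
  exact (ENNReal.rpow_lt_top_iff_of_pos (by norm_num : (0:ℝ) < 1/2)).1 h2

lemma gk_integrable (k : ℝ × ℝ → ℂ) (hk_cont : ContinuousOn k Par)
    (hk_supp : ∀ p, p ∉ Par → k p = 0) (f h : X) (r : Y) :
    Integrable (Function.uncurry (gk k f h r)) ((volume : Measure ℝ).prod volume) := by
  obtain ⟨M, hM⟩ := par_isCompact.exists_bound_of_continuousOn hk_cont
  have hM' : ∀ p, ‖k p‖ ≤ max M 0 := fun p => by
    by_cases hp : p ∈ Par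
    · exact (hM p hp).trans (le_max_left _ _)
    · simp [hk_supp p hp]
  have hFm : AEStronglyMeasurable (indF f) (volume : Measure ℝ) :=
    (indF_memℒp f).aestronglyMeasurable
  have hHm : AEStronglyMeasurable (indF h) (volume : Measure ℝ) :=
    (indF_memℒp h).aestronglyMeasurable
  have hRm : AEStronglyMeasurable (indR r) (volume : Measure ℝ) :=
    (indR_memℒp r).aestronglyMeasurable
  have hsubF : AEStronglyMeasurable (fun p : ℝ × ℝ => indF f (p.1 - p.2))
      ((volume : Measure ℝ).prod volume) := by
    have h1 : AEStronglyMeasurable (fun p : ℝ × ℝ => indF f p.1)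
        ((volume : Measure ℝ).prod volume) := hFm.comp_fst
    exact h1.comp_quasiMeasurePreserving
      (measurePreserving_sub_prod volume volume).quasiMeasurePreserving
  have hH2 : AEStronglyMeasurable (fun p : ℝ × ℝ => indF h p.2)
      ((volume : Measure ℝ).prod volume) := hHm.comp_snd
  have hR2 : AEStronglyMeasurable (fun p : ℝ × ℝ => indR r p.1)
      ((volume : Measure ℝ).prod volume) := hRm.comp_fst
  have hkm := k_aesm k hk_cont hk_supp
  have hAESM : AEStronglyMeasurable (Function.uncurry (gk k f h r))
      ((volume : Measure ℝ).prod volume) := by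
    have heq : Function.uncurry (gk k f h r) = fun p : ℝ × ℝ =>
        star (k p * indF f (p.1 - p.2) * indF h p.2) * indR r p.1 := rfl
    rw [heq]
    exact ((continuous_star.comp_aestronglyMeasurable
      ((hkm.mul hsubF).mul hH2)).mul hR2)
  refine ⟨hAESM, ?_⟩
  show (∫⁻ p, (‖Function.uncurry (gk k f h r) p‖₊ : ℝ≥0∞)
      ∂((volume : Measure ℝ).prod volume)) < ⊤
  rw [lintegral_prod (fun p => (‖Function.uncurry (gk k f h r) p‖₊ : ℝ≥0∞)) hAESM.enorm]
  set M' : ℝ≥0∞ := ENNReal.ofReal (max M 0) with hM'def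
  have hM'fin : M' ≠ ⊤ := ENNReal.ofReal_ne_top
  have hknorm : ∀ p : ℝ × ℝ, (‖k p‖₊ : ℝ≥0∞) ≤ M' := fun p => by
    rw [← enorm_eq_nnnorm, ← ofReal_norm]
    exact ENNReal.ofReal_le_ofReal (hM' p)
  set Cf : ℝ≥0∞ := ∫⁻ x, (‖indF f x‖₊ : ℝ≥0∞) ^ (2:ℝ) ∂volume with hCfdef
  set Ch : ℝ≥0∞ := ∫⁻ x, (‖indF h x‖₊ : ℝ≥0∞) ^ (2:ℝ) ∂volume with hChdef
  have hCf : Cf < ⊤ := sq_lintegral_lt_top (indF_memℒp f)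
  have hCh : Ch < ⊤ := sq_lintegral_lt_top (indF_memℒp h)
  have hconj : Real.HolderConjugate 2 2 := by rw [Real.holderConjugate_iff]; norm_num
  have hinner : ∀ s : ℝ, (∫⁻ τ, (‖Function.uncurry (gk k f h r) (s, τ)‖₊ : ℝ≥0∞) ∂volume)
      ≤ (M' * ‖indR r s‖₊) * (Cf ^ (1/2:ℝ) * Ch ^ (1/2:ℝ)) := by
    intro s
    have step1 : (∫⁻ τ, (‖Function.uncurry (gk k f h r) (s, τ)‖₊ : ℝ≥0∞) ∂volume)
        ≤ ∫⁻ τ, (M' * ‖indR r s‖₊) * ((‖indF f (s - τ)‖₊ : ℝ≥0∞) * ‖indF h τ‖₊) ∂volume := by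
      refine lintegral_mono fun τ => ?_
      have : (‖Function.uncurry (gk k f h r) (s, τ)‖₊ : ℝ≥0∞)
          = (‖k (s, τ)‖₊ : ℝ≥0∞) * ‖indF f (s - τ)‖₊ * ‖indF h τ‖₊ * ‖indR r s‖₊ := by
        simp [Function.uncurry, gk, nnnorm_mul, ENNReal.coe_mul]
      rw [this]
      calc (‖k (s, τ)‖₊ : ℝ≥0∞) * ‖indF f (s - τ)‖₊ * ‖indF h τ‖₊ * ‖indR r s‖₊
          ≤ M' * ‖indF f (s - τ)‖₊ * ‖indF h τ‖₊ * ‖indR r s‖₊ := by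
            gcongr; exact hknorm (s, τ)
        _ = (M' * ‖indR r s‖₊) * ((‖indF f (s - τ)‖₊ : ℝ≥0∞) * ‖indF h τ‖₊) := by ring
    refine step1.trans ?_
    rw [lintegral_const_mul' _ _ (by
      exact ENNReal.mul_ne_top hM'fin ENNReal.coe_ne_top)]
    refine mul_le_mul_right ?_ _
    have hmeasF : AEMeasurable (fun τ : ℝ => (‖indF f (s - τ)‖₊ : ℝ≥0∞)) volume :=
      hFm.enorm.comp_quasiMeasurePreserving
        (Measure.measurePreserving_sub_left volume s).quasiMeasurePreserving
    have hmeasH : AEMeasurable (fun τ : ℝ => (‖indF h τ‖₊ : ℝ≥0∞)) volume := hHm.enorm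
    calc (∫⁻ τ, (‖indF f (s - τ)‖₊ : ℝ≥0∞) * ‖indF h τ‖₊ ∂volume)
        ≤ (∫⁻ τ, (‖indF f (s - τ)‖₊ : ℝ≥0∞) ^ (2:ℝ) ∂volume) ^ (1/2:ℝ)
          * (∫⁻ τ, (‖indF h τ‖₊ : ℝ≥0∞) ^ (2:ℝ) ∂volume) ^ (1/2:ℝ) := by
          exact ENNReal.lintegral_mul_le_Lp_mul_Lq volume hconj hmeasF hmeasH
      _ = Cf ^ (1/2:ℝ) * Ch ^ (1/2:ℝ) := by
          congr 1
          · congr 1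
            exact (Measure.measurePreserving_sub_left volume s).lintegral_comp_emb
              (MeasurableEquiv.subLeft s).measurableEmbedding
              (fun x => (‖indF f x‖₊ : ℝ≥0∞) ^ (2:ℝ))
  calc (∫⁻ s, ∫⁻ τ, (‖Function.uncurry (gk k f h r) (s, τ)‖₊ : ℝ≥0∞) ∂volume ∂volume)
      ≤ ∫⁻ s, (M' * ‖indR r s‖₊) * (Cf ^ (1/2:ℝ) * Ch ^ (1/2:ℝ)) ∂volume :=
        lintegral_mono hinner
    _ = ∫⁻ s, ((M' * (Cf ^ (1/2:ℝ) * Ch ^ (1/2:ℝ)))) * (‖indR r s‖₊ : ℝ≥0∞) ∂volume := by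
        congr 1; funext s; ring
    _ = (M' * (Cf ^ (1/2:ℝ) * Ch ^ (1/2:ℝ))) * ∫⁻ s, (‖indR r s‖₊ : ℝ≥0∞) ∂volume := by
        refine lintegral_const_mul' _ _ ?_
        exact ENNReal.mul_ne_top hM'fin (ENNReal.mul_ne_top
          (ENNReal.rpow_ne_top_of_nonneg (by norm_num) hCf.ne)
          (ENNReal.rpow_ne_top_of_nonneg (by norm_num) hCh.ne))
    _ < ⊤ := by
        refine ENNReal.mul_lt_top ?_ ?_
        · exact ENNReal.mul_lt_top hM'fin.lt_top (ENNReal.mul_lt_top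
            (ENNReal.rpow_lt_top_of_nonneg (by norm_num) hCf.ne)
            (ENNReal.rpow_lt_top_of_nonneg (by norm_num) hCh.ne))
        · exact (indR_integrable r).2

/-- The core inner-product identity. -/
lemma key_inner (k : ℝ × ℝ → ℂ) (hk_cont : ContinuousOn k Par)
    (hk_supp : ∀ p, p ∉ Par → k p = 0)
    (f h : X) (r : Y) (u : Y) (v : X)
    (hu : ∀ᵐ s ∂μ2,
      u s = 2 * ∫ τ in (max (s - 1) 0)..(min s 1), k (s, τ) * f (s - τ) * h τ)
    (hv : ∀ᵐ τ ∂μ1,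
      v τ = 2 * ∫ s in τ..(τ + 1), (starRingEnd ℂ) (k (s, τ) * f (s - τ)) * r s) :
    (inner ℂ u r : ℂ) = inner ℂ h v := by
  classical
  have hInt := gk_integrable k hk_cont hk_supp f h r
  -- LHS computation
  have hLHS : (inner ℂ u r : ℂ) = 2 * ∫ s, ∫ τ, gk k f h r s τ ∂volume ∂volume := by
    rw [L2.inner_def]
    have hae : (fun s => (inner ℂ (u s) (r s) : ℂ)) =ᵐ[μ2]
        fun s => (2:ℂ) * ∫ τ, gk k f h r s τ ∂volume := by
      filter_upwards [hu, ae_restrict_mem measurableSet_Ioo] with s hs1 hs2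
      have hs0 : (0:ℝ) < s := hs2.1
      have hs2' : s < 2 := hs2.2
      set a := max (s - 1) 0 with ha
      set b := min s 1 with hb
      have hab : a ≤ b :=
        max_le (le_min (by linarith) (by linarith)) (le_min (by linarith) (by linarith))
      have hI : (∫ τ in a..b, k (s, τ) * f (s - τ) * h τ)
          = ∫ τ, k (s, τ) * indF f (s - τ) * indF h τ ∂volume := by
        rw [intervalIntegral.integral_of_le hab, ← integral_indicator measurableSet_Ioc]
        refine integral_congr_ae ?_
        have h1 : ∀ᵐ τ : ℝ ∂volume, τ ≠ a := by
          simpa [ae_iff] using measure_singleton a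
        have h2 : ∀ᵐ τ : ℝ ∂volume, τ ≠ b := by
          simpa [ae_iff] using measure_singleton b
        filter_upwards [h1, h2] with τ hτa hτb
        by_cases hmem : τ ∈ Set.Ioc a b
        · have hao : a < τ := hmem.1
          have hbo : τ < b := lt_of_le_of_ne hmem.2 hτb
          have hamax : s - 1 ≤ a := le_max_left _ _
          have ha0 : (0:ℝ) ≤ a := le_max_right _ _
          have hbs : b ≤ s := min_le_left _ _
          have hb1 : b ≤ 1 := min_le_right _ _
          have hτ01 : τ ∈ Set.Ioo (0:ℝ) 1 := ⟨by linarith, by linarith⟩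
          have hst : s - τ ∈ Set.Ioo (0:ℝ) 1 := ⟨by linarith, by linarith⟩
          rw [Set.indicator_of_mem hmem, indF, indF,
            Set.indicator_of_mem hst, Set.indicator_of_mem hτ01]
        · rw [Set.indicator_of_notMem hmem]
          have hnp : (s, τ) ∉ Par := by
            intro hp
            obtain ⟨p0, p1, p2, p3⟩ := hp
            dsimp at p0 p1 p2 p3
            apply hmem
            refine ⟨lt_of_le_of_ne (max_le (by linarith) p0) (Ne.symm hτa), le_min p2 p1⟩
          rw [hk_supp _ hnp]
          simp
      rw [RCLike.inner_apply, hs1, hI, map_mul, map_ofNat, ← integral_conj, mul_comm, mul_assoc,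
        ← integral_mul_const]
      congr 1
      refine integral_congr_ae (ae_of_all _ fun τ => ?_)
      rw [gk, indR, Set.indicator_of_mem hs2]
    rw [integral_congr_ae hae, integral_const_mul]
    congr 1
    exact setIntegral_eq_integral_of_forall_compl_eq_zero fun s hs => by
      have hR0 : indR r s = 0 := Set.indicator_of_notMem hs _
      simp [gk, hR0]
  -- RHS computation
  have hRHS : (inner ℂ h v : ℂ) = 2 * ∫ τ, ∫ s, gk k f h r s τ ∂volume ∂volume := by
    rw [L2.inner_def]
    have hae : (fun τ => (inner ℂ (h τ) (v τ) : ℂ)) =ᵐ[μ1]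
        fun τ => (2:ℂ) * ∫ s, gk k f h r s τ ∂volume := by
      filter_upwards [hv, ae_restrict_mem measurableSet_Ioo] with τ hτ1 hτ2
      have hτ0 : (0:ℝ) < τ := hτ2.1
      have hτ1' : τ < 1 := hτ2.2
      have hab : τ ≤ τ + 1 := by linarith
      have hJ : (∫ s in τ..(τ + 1), (starRingEnd ℂ) (k (s, τ) * f (s - τ)) * r s)
          = ∫ s, (starRingEnd ℂ) (k (s, τ) * indF f (s - τ)) * indR r s ∂volume := by
        rw [intervalIntegral.integral_of_le hab, ← integral_indicator measurableSet_Ioc]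
        refine integral_congr_ae ?_
        have h1 : ∀ᵐ s : ℝ ∂volume, s ≠ τ := by
          simpa [ae_iff] using measure_singleton τ
        have h2 : ∀ᵐ s : ℝ ∂volume, s ≠ τ + 1 := by
          simpa [ae_iff] using measure_singleton (τ + 1)
        filter_upwards [h1, h2] with s hsτ hsτ1
        by_cases hmem : s ∈ Set.Ioc τ (τ + 1)
        · have hao : τ < s := hmem.1
          have hbo : s < τ + 1 := lt_of_le_of_ne hmem.2 hsτ1
          have hs02 : s ∈ Set.Ioo (0:ℝ) 2 := ⟨by linarith, by linarith⟩
          have hst : s - τ ∈ Set.Ioo (0:ℝ) 1 := ⟨by linarith, by linarith⟩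
          rw [Set.indicator_of_mem hmem, indF, indR,
            Set.indicator_of_mem hst, Set.indicator_of_mem hs02]
        · rw [Set.indicator_of_notMem hmem]
          have hnp : (s, τ) ∉ Par := by
            intro hp
            obtain ⟨p0, p1, p2, p3⟩ := hp
            dsimp at p0 p1 p2 p3
            apply hmem
            refine ⟨lt_of_le_of_ne p2 hsτ.symm, p3⟩
          rw [hk_supp _ hnp]
          simp
      rw [RCLike.inner_apply, hτ1, hJ, mul_assoc]
      congr 1
      rw [← integral_mul_const]
      refine integral_congr_ae (ae_of_all _ fun s => ?_)
      have hHτ : indF h τ = (h : ℝ → ℂ) τ := Set.indicator_of_mem hτ2 _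
      simp only [gk]
      rw [hHτ]
      simp only [map_mul]
      ring
    rw [integral_congr_ae hae, integral_const_mul]
    congr 1
    exact setIntegral_eq_integral_of_forall_compl_eq_zero fun τ hτ => by
      have hH0 : indF h τ = 0 := Set.indicator_of_notMem hτ _
      have : ∀ s : ℝ, gk k f h r s τ = 0 := fun s => by simp [gk, hH0]
      simp [this]
  rw [hLHS, hRHS, integral_integral_swap hInt]

/-- For every `f ∈ X`, the Hilbert-space adjoint `F'(f)* : Y → X` of the
bounded linear operator `F'(f)` is given by
`[F'(f)* r](τ) = 2 ∫_τ^{τ+1} conj(k(s,τ) f(s−τ)) r(s) ds`; that is, any operator `A : Y → X`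
with this integral representation equals the adjoint and satisfies
`⟨F'(f)h, r⟩_Y = ⟨h, A r⟩_X` for all `h ∈ X`, `r ∈ Y`. -/
theorem stmt4 (k : ℝ × ℝ → ℂ) (hk_cont : ContinuousOn k Par)
    (hk_supp : ∀ p, p ∉ Par → k p = 0)
    (hk_symm : ∀ p ∈ Par, k p = k (p.1, p.1 - p.2))
    (DF : X → (X →L[ℂ] Y))
    (hDF : ∀ f h : X, ∀ᵐ s ∂μ2,
      DF f h s = 2 * ∫ τ in (max (s - 1) 0)..(min s 1), k (s, τ) * f (s - τ) * h τ) :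
    ∀ (f : X) (A : Y →L[ℂ] X),
      (∀ r : Y, ∀ᵐ τ ∂μ1,
        A r τ = 2 * ∫ s in τ..(τ + 1), (starRingEnd ℂ) (k (s, τ) * f (s - τ)) * r s) →
      A = ContinuousLinearMap.adjoint (DF f) ∧
        ∀ (h : X) (r : Y), (inner ℂ (DF f h) r : ℂ) = inner ℂ h (A r) := by
  intro f A hA
  have key : ∀ (h : X) (r : Y), (inner ℂ (DF f h) r : ℂ) = inner ℂ h (A r) := fun h r =>
    key_inner k hk_cont hk_supp f h r (DF f h) (A r) (hDF f h) (hA r)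
  refine ⟨?_, key⟩
  rw [ContinuousLinearMap.eq_adjoint_iff]
  intro x y
  rw [← inner_conj_symm, ← key y x, inner_conj_symm]
end
end

section
/- Let the kernel k on 𝔓 be generated by a function κ ∈ C[0,1] with supp(κ) = [0,1] (equivalently, κ ≠ 0 almost everywhere on [0,1]) via k(s,τ) = κ(τ)κ(s−τ) for (s,τ) ∈ 𝔓 and k(s,τ) = 0 otherwise. If for given g ∈ Y the function f† ∈ X solves F(f) = g, then f† and −f† are the only solutions of this equation in X for the right-hand side g. -/
open MeasureTheory Complex Set Filter Topology
open scoped ENNReal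

noncomputable section

/-! ### Auxiliary material for the proof of `stmt11`. -/

instance : IsFiniteMeasure μ1 :=
  ⟨by rw [Measure.restrict_apply_univ, Real.volume_Ioo]; exact ENNReal.ofReal_lt_top⟩

/-- If `φ` is continuous and `w` vanishes off `(0,1)` and is integrable, `φ·w` is integrable. -/
lemma cont_mul_integrable {w : ℝ → ℂ} (hw : Integrable w (volume : Measure ℝ))
    (hsupp : ∀ t, t ∉ Set.Ioo (0:ℝ) 1 → w t = 0) {φ : ℝ → ℂ} (hφ : Continuous φ) :
    Integrable (fun t => φ t * w t) (volume : Measure ℝ) := by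
  obtain ⟨C, hC⟩ : ∃ C, ∀ t ∈ Set.Icc (0:ℝ) 1, ‖φ t‖ ≤ C :=
    isCompact_Icc.exists_bound_of_continuousOn hφ.continuousOn
  refine (hw.norm.const_mul C).mono'
    (hφ.aestronglyMeasurable.mul hw.aestronglyMeasurable)
    (Eventually.of_forall fun t => ?_)
  by_cases ht : t ∈ Set.Ioo (0:ℝ) 1
  · have h1 := hC t (Set.Ioo_subset_Icc_self ht)
    calc ‖φ t * w t‖ = ‖φ t‖ * ‖w t‖ := norm_mul _ _
      _ ≤ C * ‖w t‖ := by gcongr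
  · simp [hsupp t ht]

/-- A function supported in `(0,1)` with all vanishing moments vanishes a.e. -/
lemma ae_zero_of_moments {w : ℝ → ℂ} (hw : Integrable w (volume : Measure ℝ))
    (hsupp : ∀ t, t ∉ Set.Ioo (0:ℝ) 1 → w t = 0)
    (hm : ∀ n : ℕ, ∫ t : ℝ, (t:ℂ)^n * w t = 0) :
    ∀ᵐ t ∂(volume : Measure ℝ), w t = 0 := by
  have hpolyint : ∀ p : Polynomial ℝ,
      Integrable (fun t : ℝ => ((p.eval t : ℝ) : ℂ) * w t) volume := by
    intro p
    exact cont_mul_integrable hw hsupp (Complex.continuous_ofReal.comp p.continuous_aeval)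
  have hpoly : ∀ p : Polynomial ℝ, ∫ t : ℝ, ((p.eval t : ℝ) : ℂ) * w t = 0 := by
    intro p
    induction p using Polynomial.induction_on' with
    | add p q hp hq =>
      simp only [Polynomial.eval_add, Complex.ofReal_add, add_mul]
      rw [integral_add (hpolyint p) (hpolyint q), hp, hq, add_zero]
    | monomial n a =>
      simp only [Polynomial.eval_monomial, Complex.ofReal_mul, Complex.ofReal_pow, mul_assoc]
      rw [integral_const_mul, hm n, mul_zero]
  apply ae_eq_zero_of_integral_contDiff_smul_eq_zero hw.locallyIntegrable
  intro g hg hgsupp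
  have hgw : Integrable (fun t => ((g t : ℝ) : ℂ) * w t) volume :=
    cont_mul_integrable hw hsupp (Complex.continuous_ofReal.comp hg.continuous)
  have key : ∀ ε : ℝ, 0 < ε → ‖∫ t, g t • w t‖ ≤ ε * ∫ t, ‖w t‖ := by
    intro ε hε
    obtain ⟨p, hp⟩ := exists_polynomial_near_of_continuousOn 0 1 g hg.continuous.continuousOn ε hε
    have h1 : ∫ t, g t • w t = ∫ t : ℝ, ((g t - p.eval t : ℝ) : ℂ) * w t := by
      have : (fun t => g t • w t)
          = fun t => ((g t - p.eval t : ℝ) : ℂ) * w t + ((p.eval t : ℝ) : ℂ) * w t := by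
        funext t
        rw [Complex.real_smul]
        push_cast
        ring
      rw [this, integral_add _ (hpolyint p), hpoly p, add_zero]
      · exact (hgw.sub (hpolyint p)).congr
          (Eventually.of_forall fun t => by simp only [Pi.sub_apply]; push_cast; ring)
    rw [h1]
    have hb : Integrable (fun t => ε * ‖w t‖) volume := hw.norm.const_mul ε
    calc ‖∫ t : ℝ, ((g t - p.eval t : ℝ) : ℂ) * w t‖ ≤ ∫ t, ε * ‖w t‖ := by
          apply norm_integral_le_of_norm_le hb
          filter_upwards with t
          by_cases ht : t ∈ Set.Ioo (0:ℝ) 1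
          · have h2 := hp t (Set.Ioo_subset_Icc_self ht)
            rw [norm_mul]
            have : ‖((g t - p.eval t : ℝ) : ℂ)‖ ≤ ε := by
              rw [Complex.norm_real, Real.norm_eq_abs, abs_sub_comm]
              exact (le_of_lt h2)
            gcongr
          · simp [hsupp t ht]
      _ = ε * ∫ t, ‖w t‖ := integral_const_mul ε _
  have hI : ∫ t, g t • w t = 0 := by
    by_contra hne
    have hpos : 0 < ‖∫ t, g t • w t‖ := norm_pos_iff.mpr hne
    set B := ∫ t, ‖w t‖ with hB
    have hB0 : 0 ≤ B := integral_nonneg fun t => norm_nonneg _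
    have := key (‖∫ t, g t • w t‖ / (2 * (B + 1))) (by positivity)
    rw [div_mul_eq_mul_div] at this
    have h2 : ‖∫ t, g t • w t‖ * B / (2 * (B + 1)) < ‖∫ t, g t • w t‖ := by
      rw [div_lt_iff₀ (by positivity)]
      nlinarith
    linarith
  exact hI

/-- Moments of the autoconvolution of a function supported in `(0,1)`. -/
lemma conv_moment {u : ℝ → ℂ} (hu : Integrable u (volume : Measure ℝ))
    (hsupp : ∀ t, t ∉ Set.Ioo (0:ℝ) 1 → u t = 0) (n : ℕ) :
    ∫ s : ℝ, (s:ℂ)^n * ∫ τ : ℝ, u τ * u (s - τ)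
      = ∑ k ∈ Finset.range (n+1), (n.choose k : ℂ) *
          (∫ t : ℝ, (t:ℂ)^k * u t) * (∫ t : ℝ, (t:ℂ)^(n-k) * u t) := by
  have hmomint : ∀ m : ℕ, Integrable (fun t : ℝ => (t:ℂ)^m * u t) volume := fun m =>
    cont_mul_integrable hu hsupp (Complex.continuous_ofReal.pow _)
  have hK : Integrable (fun p : ℝ × ℝ => u p.2 * u (p.1 - p.2))
      ((volume : Measure ℝ).prod volume) :=
    hu.convolution_integrand (ContinuousLinearMap.mul ℝ ℂ) hu
  have hH : Integrable (fun p : ℝ × ℝ => (p.1:ℂ)^n * (u p.2 * u (p.1 - p.2)))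
      ((volume : Measure ℝ).prod volume) := by
    refine (hK.norm.const_mul (2^n)).mono'
      (((continuous_ofReal.comp continuous_fst).pow n).aestronglyMeasurable.mul
        hK.aestronglyMeasurable) (Eventually.of_forall fun p => ?_)
    by_cases hp : u p.2 * u (p.1 - p.2) = 0
    · simp [hp]
    · have h1 : u p.2 ≠ 0 := fun h => hp (by simp [h])
      have h2 : u (p.1 - p.2) ≠ 0 := fun h => hp (by simp [h])
      have hp2 : p.2 ∈ Set.Ioo (0:ℝ) 1 := by
        by_contra hc; exact h1 (hsupp _ hc)
      have hp12 : p.1 - p.2 ∈ Set.Ioo (0:ℝ) 1 := by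
        by_contra hc; exact h2 (hsupp _ hc)
      have habs : |p.1| ≤ 2 := by
        rw [abs_le]; constructor <;> [nlinarith [hp2.1, hp12.1]; nlinarith [hp2.2, hp12.2]]
      rw [norm_mul]
      gcongr
      calc ‖((p.1:ℝ):ℂ)^n‖ = |p.1|^n := by
            rw [norm_pow, Complex.norm_real, Real.norm_eq_abs]
        _ ≤ 2^n := pow_le_pow_left₀ (abs_nonneg _) habs n
  have step1 : ∫ s : ℝ, (s:ℂ)^n * ∫ τ : ℝ, u τ * u (s - τ)
      = ∫ τ : ℝ, ∫ s : ℝ, (s:ℂ)^n * (u τ * u (s - τ)) := by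
    have h1 : ∀ s : ℝ, (s:ℂ)^n * ∫ τ : ℝ, u τ * u (s - τ)
        = ∫ τ : ℝ, (s:ℂ)^n * (u τ * u (s - τ)) := fun s =>
      (integral_const_mul _ _).symm
    simp_rw [h1]
    exact integral_integral_swap hH
  rw [step1]
  have step2 : ∀ τ : ℝ, ∫ s : ℝ, (s:ℂ)^n * (u τ * u (s - τ))
      = ∑ k ∈ Finset.range (n+1),
          ((n.choose k : ℂ) * (τ:ℂ)^(n-k) * u τ) * ∫ x : ℝ, (x:ℂ)^k * u x := by
    intro τ
    have e1 : ∫ s : ℝ, (s:ℂ)^n * (u τ * u (s - τ))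
        = ∫ x : ℝ, (((x + τ : ℝ)):ℂ)^n * (u τ * u x) := by
      rw [← integral_sub_right_eq_self (fun x : ℝ => (((x + τ : ℝ)):ℂ)^n * (u τ * u x)) τ]
      congr 1; funext s; simp [sub_add_cancel]
    rw [e1]
    have e2 : ∀ x : ℝ, (((x + τ : ℝ)):ℂ)^n * (u τ * u x)
        = ∑ k ∈ Finset.range (n+1),
            ((n.choose k : ℂ) * (τ:ℂ)^(n-k) * u τ) * ((x:ℂ)^k * u x) := by
      intro x
      push_cast
      rw [add_pow, Finset.sum_mul]
      refine Finset.sum_congr rfl fun k _ => by ring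
    simp_rw [e2]
    rw [integral_finset_sum]
    · exact Finset.sum_congr rfl fun k _ => integral_const_mul _ _
    · intro k _
      exact (hmomint k).const_mul _
  simp_rw [step2]
  rw [integral_finset_sum]
  · refine Finset.sum_congr rfl fun k _ => ?_
    have e3 : ∀ τ : ℝ, ((n.choose k : ℂ) * (τ:ℂ)^(n-k) * u τ) * (∫ x : ℝ, (x:ℂ)^k * u x)
        = ((n.choose k : ℂ) * (∫ x : ℝ, (x:ℂ)^k * u x)) * ((τ:ℂ)^(n-k) * u τ) := fun τ => by
      ring
    simp_rw [e3]
    rw [integral_const_mul]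
  · intro k _
    have : (fun τ : ℝ => ((n.choose k : ℂ) * (τ:ℂ)^(n-k) * u τ) * ∫ x : ℝ, (x:ℂ)^k * u x)
        = fun τ : ℝ => ((n.choose k : ℂ) * (∫ x : ℝ, (x:ℂ)^k * u x)) * ((τ:ℂ)^(n-k) * u τ) := by
      funext τ; ring
    rw [this]
    exact (hmomint (n-k)).const_mul _

open scoped Nat in
/-- Sequences whose "binomial squares" agree are equal up to a global sign. -/
lemma seq_pm (a b : ℕ → ℂ)
    (h : ∀ n, ∑ k ∈ Finset.range (n+1), (n.choose k : ℂ) * a k * a (n-k)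
        = ∑ k ∈ Finset.range (n+1), (n.choose k : ℂ) * b k * b (n-k)) :
    (∀ n, a n = b n) ∨ (∀ n, a n = - b n) := by
  set A : PowerSeries ℂ := PowerSeries.mk (fun n => a n / n !) with hA
  set B : PowerSeries ℂ := PowerSeries.mk (fun n => b n / n !) with hB
  have key : ∀ (c : ℕ → ℂ) (n : ℕ),
      ∑ p ∈ Finset.HasAntidiagonal.antidiagonal n, (c p.1 / p.1 !) * (c p.2 / p.2 !)
        = (n ! : ℂ)⁻¹ * ∑ k ∈ Finset.range (n+1), (n.choose k : ℂ) * c k * c (n-k) := by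
    intro c n
    rw [Finset.Nat.sum_antidiagonal_eq_sum_range_succ_mk, Finset.mul_sum]
    refine Finset.sum_congr rfl fun k hk => ?_
    have hkn : k ≤ n := Nat.lt_succ_iff.mp (Finset.mem_range.mp hk)
    rw [Nat.cast_choose ℂ hkn]
    have h1 : (k ! : ℂ) ≠ 0 := Nat.cast_ne_zero.mpr (Nat.factorial_ne_zero k)
    have h2 : ((n-k)! : ℂ) ≠ 0 := Nat.cast_ne_zero.mpr (Nat.factorial_ne_zero _)
    have h3 : (n ! : ℂ) ≠ 0 := Nat.cast_ne_zero.mpr (Nat.factorial_ne_zero n)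
    field_simp
  have hAB : A * A = B * B := by
    ext n
    rw [PowerSeries.coeff_mul, PowerSeries.coeff_mul]
    simp only [hA, hB, PowerSeries.coeff_mk]
    rw [key a n, key b n, h n]
  have hfact : (A - B) * (A + B) = 0 := by
    have : (A - B) * (A + B) = A * A - B * B := by ring
    rw [this, hAB, sub_self]
  rcases mul_eq_zero.mp hfact with h0 | h0
  · left
    intro n
    have := congrArg (PowerSeries.coeff n) h0
    simp only [map_sub, map_zero, hA, hB, PowerSeries.coeff_mk, sub_eq_zero] at this
    have h3 : (n ! : ℂ) ≠ 0 := Nat.cast_ne_zero.mpr (Nat.factorial_ne_zero n)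
    field_simp at this
    exact this
  · right
    intro n
    have := congrArg (PowerSeries.coeff n) h0
    simp only [map_add, map_zero, hA, hB, PowerSeries.coeff_mk] at this
    have h3 : (n ! : ℂ) ≠ 0 := Nat.cast_ne_zero.mpr (Nat.factorial_ne_zero n)
    have h4 : a n / n ! = - (b n / n !) := by linear_combination this
    field_simp at h4
    exact h4

/-- If two functions agree a.e. on `(0,1)`, the autoconvolution-type interval integrals agree. -/
lemma interval_congr (f₁ f₂ : ℝ → ℂ) (h : f₁ =ᵐ[μ1] f₂) (k : ℝ × ℝ → ℂ) {s : ℝ}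
    (hs0 : 0 ≤ s) (hs2 : s ≤ 2) :
    ∫ τ in (max (s - 1) 0)..(min s 1), k (s, τ) * f₁ (s - τ) * f₁ τ
      = ∫ τ in (max (s - 1) 0)..(min s 1), k (s, τ) * f₂ (s - τ) * f₂ τ := by
  set N : Set ℝ := {t | f₁ t ≠ f₂ t} with hNdef
  have hN : volume (N ∩ Set.Ioo 0 1) = 0 := by
    have h' := h
    rw [EventuallyEq, ae_iff] at h'
    rwa [Measure.restrict_apply' measurableSet_Ioo] at h'
  set N' : Set ℝ := (N ∩ Set.Ioo 0 1) ∪ {0, 1} with hN'def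
  have hN' : volume N' = 0 := by
    apply measure_union_null hN
    exact (Set.toFinite _).measure_zero volume
  have key : ∀ t ∈ Set.Icc (0:ℝ) 1, t ∉ N' → f₁ t = f₂ t := by
    intro t ht htN
    by_contra hne
    apply htN
    rcases eq_or_lt_of_le ht.1 with h0 | h0
    · exact Or.inr (Or.inl h0.symm)
    rcases eq_or_lt_of_le ht.2 with h1 | h1
    · exact Or.inr (Or.inr h1)
    exact Or.inl ⟨hne, h0, h1⟩
  have hab : max (s - 1) 0 ≤ min s 1 := by
    rw [max_le_iff, le_min_iff, le_min_iff]
    constructor <;> constructor <;> linarith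
  apply intervalIntegral.integral_congr_ae
  have h1 : ∀ᵐ τ ∂(volume : Measure ℝ), τ ∉ N' := measure_eq_zero_iff_ae_notMem.mp hN'
  have h2 : ∀ᵐ τ ∂(volume : Measure ℝ), τ ∉ (fun τ => s - τ) ⁻¹' N' := by
    apply measure_eq_zero_iff_ae_notMem.mp
    exact ((Measure.measurePreserving_sub_left (volume : Measure ℝ)
      s).quasiMeasurePreserving).preimage_null hN'
  filter_upwards [h1, h2] with τ hτ hsτ hmem
  rw [Set.uIoc_of_le hab] at hmem
  have hτIcc : τ ∈ Set.Icc (0:ℝ) 1 :=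
    ⟨le_of_lt (lt_of_le_of_lt (le_max_right _ _) hmem.1),
      le_trans hmem.2 (min_le_right _ _)⟩
  have hsτIcc : s - τ ∈ Set.Icc (0:ℝ) 1 := by
    constructor
    · have h3 : min s 1 ≤ s := min_le_left _ _
      have := hmem.2
      linarith
    · have h4 : s - 1 ≤ max (s - 1) 0 := le_max_left _ _
      have := hmem.1
      linarith
  rw [key τ hτIcc hτ, key (s - τ) hsτIcc hsτ]

/-- Modified integrand. -/
def UU (κ : ℝ → ℂ) (h : ℝ → ℂ) : ℝ → ℂ :=
  (Set.Ioo (0:ℝ) 1).indicator (fun t => κ t * h t)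

lemma UU_supp (κ h : ℝ → ℂ) : ∀ t, t ∉ Set.Ioo (0:ℝ) 1 → UU κ h t = 0 :=
  fun _ ht => Set.indicator_of_notMem ht _

lemma UU_int {κ : ℝ → ℂ} (hκ_cont : ContinuousOn κ (Set.Icc (0:ℝ) 1)) (h : X) :
    Integrable (UU κ ⇑h) (volume : Measure ℝ) := by
  rw [UU, integrable_indicator_iff measurableSet_Ioo]
  have hfint : Integrable (⇑h) μ1 := (Lp.memLp h).integrable (by norm_num)
  obtain ⟨C, hC⟩ : ∃ C, ∀ t ∈ Set.Icc (0:ℝ) 1, ‖κ t‖ ≤ C :=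
    isCompact_Icc.exists_bound_of_continuousOn hκ_cont
  refine Integrable.bdd_mul (c := C) hfint
    ((hκ_cont.mono Set.Ioo_subset_Icc_self).aestronglyMeasurable measurableSet_Ioo) ?_
  filter_upwards [ae_restrict_mem measurableSet_Ioo] with t ht
  exact hC t (Set.Ioo_subset_Icc_self ht)

/-- Let the kernel `k` be generated by `κ ∈ C[0,1]` with `supp(κ) = [0,1]`
(i.e. `κ ≠ 0` a.e. on `[0,1]`) via `k(s,τ) = κ(τ)κ(s−τ)` on `𝔓`, `k = 0` otherwise.
If `f† ∈ X` solves `F(f) = g` for given `g ∈ Y`, then `f†` and `−f†` are the only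
solutions in `X` for the right-hand side `g`. -/
theorem stmt11 (κ : ℝ → ℂ) (hκ_cont : ContinuousOn κ (Set.Icc (0:ℝ) 1))
    (hκ_supp : ∀ᵐ τ ∂μ1, κ τ ≠ 0)
    (k : ℝ × ℝ → ℂ)
    (hk_gen : ∀ p ∈ Par, k p = κ p.2 * κ (p.1 - p.2))
    (hk_supp : ∀ p, p ∉ Par → k p = 0)
    (F : X → Y)
    (hF : ∀ f : X, ∀ᵐ s ∂μ2,
      F f s = ∫ τ in (max (s - 1) 0)..(min s 1), k (s, τ) * f (s - τ) * f τ)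
    (g : Y) (fdag : X) (hsol : F fdag = g) :
    F (-fdag) = g ∧ ∀ f : X, F f = g → f = fdag ∨ f = -fdag := by

  constructor
  · -- `F (-f†) = g`
    have hpart1 : F (-fdag) = F fdag := by
      apply Lp.ext (μ := μ2)
      filter_upwards [hF fdag, hF (-fdag), ae_restrict_mem measurableSet_Ioo]
        with s e1 e2 hs
      rw [e2, e1,
        interval_congr (⇑(-fdag)) (-⇑fdag) (Lp.coeFn_neg fdag) k hs.1.le hs.2.le]
      apply intervalIntegral.integral_congr
      intro τ _
      simp only [Pi.neg_apply]
      ring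
    rw [hpart1, hsol]
  · -- uniqueness up to sign
    intro f hsolf
    -- the autoconvolutions of `U f` and `U fdag` agree a.e.
    have conv_eq : ∀ h : X, ∀ s ∈ Set.Ioo (0:ℝ) 2,
        (∫ τ : ℝ, UU κ (⇑h) τ * UU κ (⇑h) (s - τ))
          = ∫ τ in (max (s - 1) 0)..(min s 1), k (s, τ) * h (s - τ) * h τ := by
      intro h s hs
      have hab : max (s - 1) 0 ≤ min s 1 := by
        rw [max_le_iff, le_min_iff, le_min_iff]
        exact ⟨⟨by linarith [hs.2], by linarith [hs.2]⟩, ⟨hs.1.le, zero_le_one⟩⟩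
      rw [intervalIntegral.integral_of_le hab, integral_Ioc_eq_integral_Ioo]
      rw [← setIntegral_eq_integral_of_forall_compl_eq_zero
        (s := Set.Ioo (max (s - 1) 0) (min s 1))
        (f := fun τ => UU κ (⇑h) τ * UU κ (⇑h) (s - τ)) ?_]
      · apply setIntegral_congr_fun measurableSet_Ioo
        intro τ hτ
        have h1 : τ ∈ Set.Ioo (0:ℝ) 1 :=
          ⟨lt_of_le_of_lt (le_max_right _ _) hτ.1,
            lt_of_lt_of_le hτ.2 (min_le_right _ _)⟩
        have h2 : s - τ ∈ Set.Ioo (0:ℝ) 1 := by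
          constructor
          · have := lt_of_lt_of_le hτ.2 (min_le_left _ _); linarith
          · have := lt_of_le_of_lt (le_max_left _ _) hτ.1; linarith
        have hPar : (s, τ) ∈ Par := ⟨h1.1.le, h1.2.le, by
          have := lt_of_lt_of_le hτ.2 (min_le_left _ _); linarith, by
          have := lt_of_le_of_lt (le_max_left _ _) hτ.1; linarith⟩
        simp only [UU, Set.indicator_of_mem h1, Set.indicator_of_mem h2]
        rw [hk_gen (s, τ) hPar]
        ring
      · intro τ hτ
        show UU κ (⇑h) τ * UU κ (⇑h) (s - τ) = 0
        by_cases h1 : τ ∈ Set.Ioo (0:ℝ) 1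
        · by_cases h2 : s - τ ∈ Set.Ioo (0:ℝ) 1
          · exfalso
            apply hτ
            constructor
            · rw [max_lt_iff]; exact ⟨by linarith [h2.2], h1.1⟩
            · rw [lt_min_iff]; exact ⟨by linarith [h2.1], h1.2⟩
          · rw [UU_supp κ (⇑h) _ h2, mul_zero]
        · rw [UU_supp κ (⇑h) _ h1, zero_mul]
    have conv_zero : ∀ h : X, ∀ s : ℝ, s ∉ Set.Ioo (0:ℝ) 2 →
        (∫ τ : ℝ, UU κ (⇑h) τ * UU κ (⇑h) (s - τ)) = 0 := by
      intro h s hs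
      have hz : ∀ τ : ℝ, UU κ (⇑h) τ * UU κ (⇑h) (s - τ) = 0 := by
        intro τ
        by_cases h1 : τ ∈ Set.Ioo (0:ℝ) 1
        · by_cases h2 : s - τ ∈ Set.Ioo (0:ℝ) 1
          · exact absurd ⟨by linarith [h1.1, h2.1], by linarith [h1.2, h2.2]⟩ hs
          · rw [UU_supp κ (⇑h) _ h2, mul_zero]
        · rw [UU_supp κ (⇑h) _ h1, zero_mul]
      simp only [hz, integral_zero]
    have hae : (fun s => ∫ τ : ℝ, UU κ (⇑f) τ * UU κ (⇑f) (s - τ))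
        =ᵐ[volume] (fun s => ∫ τ : ℝ, UU κ (⇑fdag) τ * UU κ (⇑fdag) (s - τ)) := by
      have h12 : ∀ᵐ s ∂μ2,
          (∫ τ in (max (s - 1) 0)..(min s 1), k (s, τ) * f (s - τ) * f τ)
            = ∫ τ in (max (s - 1) 0)..(min s 1), k (s, τ) * fdag (s - τ) * fdag τ := by
        filter_upwards [hF f, hF fdag] with s e1 e2
        rw [← e1, ← e2, hsolf, hsol]
      rw [EventuallyEq, ae_iff]
      rw [ae_iff, Measure.restrict_apply' measurableSet_Ioo] at h12
      apply measure_mono_null _ h12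
      intro s hs
      simp only [Set.mem_setOf_eq] at hs ⊢
      by_cases hsI : s ∈ Set.Ioo (0:ℝ) 2
      · refine ⟨fun he => hs ?_, hsI⟩
        rw [conv_eq f s hsI, conv_eq fdag s hsI, he]
      · exact absurd (by rw [conv_zero f s hsI, conv_zero fdag s hsI]) hs
    -- moment identity
    have hmome : ∀ n : ℕ,
        ∑ j ∈ Finset.range (n+1), (n.choose j : ℂ) *
          (∫ t : ℝ, (t:ℂ)^j * UU κ (⇑f) t) * (∫ t : ℝ, (t:ℂ)^(n-j) * UU κ (⇑f) t)
        = ∑ j ∈ Finset.range (n+1), (n.choose j : ℂ) *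
          (∫ t : ℝ, (t:ℂ)^j * UU κ (⇑fdag) t) * (∫ t : ℝ, (t:ℂ)^(n-j) * UU κ (⇑fdag) t) := by
      intro n
      rw [← conv_moment (UU_int hκ_cont f) (UU_supp κ (⇑f)) n,
        ← conv_moment (UU_int hκ_cont fdag) (UU_supp κ (⇑fdag)) n]
      apply integral_congr_ae
      filter_upwards [hae] with s hsa
      rw [hsa]
    rcases seq_pm _ _ hmome with hc | hc
    · left
      apply Lp.ext (μ := μ1)
      have hz : ∀ᵐ t ∂(volume : Measure ℝ), UU κ (⇑f) t - UU κ (⇑fdag) t = 0 := by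
        have hint : Integrable (fun t : ℝ => UU κ (⇑f) t - UU κ (⇑fdag) t) volume :=
          (UU_int hκ_cont f).sub (UU_int hκ_cont fdag)
        refine ae_zero_of_moments (w := fun t => UU κ (⇑f) t - UU κ (⇑fdag) t) hint
          (fun t ht => by
            show UU κ (⇑f) t - UU κ (⇑fdag) t = 0
            rw [UU_supp κ (⇑f) t ht, UU_supp κ (⇑fdag) t ht, sub_zero])
          (fun n => ?_)
        have : (fun t : ℝ => (t:ℂ)^n * (UU κ (⇑f) t - UU κ (⇑fdag) t))
            = fun t : ℝ => (t:ℂ)^n * UU κ (⇑f) t - (t:ℂ)^n * UU κ (⇑fdag) t := by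
          funext t; ring
        rw [this, integral_sub
          (cont_mul_integrable (UU_int hκ_cont f) (UU_supp κ (⇑f)) (φ := fun t : ℝ => (t:ℂ)^n) (Complex.continuous_ofReal.pow _))
          (cont_mul_integrable (UU_int hκ_cont fdag) (UU_supp κ (⇑fdag)) (φ := fun t : ℝ => (t:ℂ)^n) (Complex.continuous_ofReal.pow _)),
          hc n, sub_self]
      filter_upwards [ae_restrict_of_ae hz, ae_restrict_mem measurableSet_Ioo, hκ_supp]
        with t h1 h2 h3
      have e1 : κ t * f t = κ t * fdag t := by
        have := h1
        simp only [UU, Set.indicator_of_mem h2, sub_eq_zero] at this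
        exact this
      exact mul_left_cancel₀ h3 e1
    · right
      apply Lp.ext (μ := μ1)
      have hz : ∀ᵐ t ∂(volume : Measure ℝ), UU κ (⇑f) t + UU κ (⇑fdag) t = 0 := by
        have hint : Integrable (fun t : ℝ => UU κ (⇑f) t + UU κ (⇑fdag) t) volume :=
          (UU_int hκ_cont f).add (UU_int hκ_cont fdag)
        refine ae_zero_of_moments (w := fun t => UU κ (⇑f) t + UU κ (⇑fdag) t) hint
          (fun t ht => by
            show UU κ (⇑f) t + UU κ (⇑fdag) t = 0
            rw [UU_supp κ (⇑f) t ht, UU_supp κ (⇑fdag) t ht, add_zero])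
          (fun n => ?_)
        have : (fun t : ℝ => (t:ℂ)^n * (UU κ (⇑f) t + UU κ (⇑fdag) t))
            = fun t : ℝ => (t:ℂ)^n * UU κ (⇑f) t + (t:ℂ)^n * UU κ (⇑fdag) t := by
          funext t; ring
        rw [this, integral_add
          (cont_mul_integrable (UU_int hκ_cont f) (UU_supp κ (⇑f)) (φ := fun t : ℝ => (t:ℂ)^n) (Complex.continuous_ofReal.pow _))
          (cont_mul_integrable (UU_int hκ_cont fdag) (UU_supp κ (⇑fdag)) (φ := fun t : ℝ => (t:ℂ)^n) (Complex.continuous_ofReal.pow _)),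
          hc n]
        ring
      filter_upwards [ae_restrict_of_ae hz, ae_restrict_mem measurableSet_Ioo, hκ_supp,
        Lp.coeFn_neg fdag] with t h1 h2 h3 h4
      rw [h4]
      have e1 : κ t * f t = κ t * (- fdag t) := by
        have := h1
        simp only [UU, Set.indicator_of_mem h2] at this
        have := add_eq_zero_iff_eq_neg.mp this
        rw [this]; ring
      simp only [Pi.neg_apply]
      exact mul_left_cancel₀ h3 e1
end
end

section
/- For every ε > 0, the operator Sign_ε : L²_ℂ(0,2) → L²_ℂ(0,2), defined pointwise by [Sign_ε(g)](s) = g(s)/max(ε, |g(s)|), is Lipschitz continuous with Lipschitz constant 1/ε, i.e., ‖Sign_ε(g₁) − Sign_ε(g₂)‖_{L²} ≤ (1/ε)‖g₁ − g₂‖_{L²} for all g₁, g₂ ∈ L²_ℂ(0,2). -/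
open MeasureTheory Complex Set Filter Topology
open scoped ENNReal

noncomputable section

section Aux
set_option maxHeartbeats 1000000
open ComplexConjugate in
/-- Pointwise `1/ε`-Lipschitz estimate for `z ↦ z / max ε |z|` on `ℂ`. -/
lemma signEps_lipschitz_pointwise (ε : ℝ) (hε : 0 < ε) (a b : ℂ) :
    ‖a / ((max ε ‖a‖ : ℝ) : ℂ)
      - b / ((max ε ‖b‖ : ℝ) : ℂ)‖ ≤ (1 / ε) * ‖a - b‖ := by
  set x := ‖a‖ with hx
  set y := ‖b‖ with hy
  set Ma := max ε x with hMa
  set Mb := max ε y with hMb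
  have hx0 : 0 ≤ x := norm_nonneg a
  have hy0 : 0 ≤ y := norm_nonneg b
  have hMa0 : 0 < Ma := lt_max_of_lt_left hε
  have hMb0 : 0 < Mb := lt_max_of_lt_left hε
  have hxMa : x ≤ Ma := le_max_right _ _
  have hyMb : y ≤ Mb := le_max_right _ _
  have hεMa : ε ≤ Ma := le_max_left _ _
  have hεMb : ε ≤ Mb := le_max_left _ _
  set t := (a * conj b).re with ht
  clear_value t
  have htle : t ≤ x * y := by
    rw [ht]
    calc (a * conj b).re ≤ ‖a * conj b‖ := Complex.re_le_norm _
    _ = x * y := by rw [norm_mul, Complex.norm_conj]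
  have htge : -(x * y) ≤ t := by
    have h := Complex.abs_re_le_norm (a * conj b)
    rw [norm_mul, Complex.norm_conj] at h
    rw [ht]
    linarith [abs_le.mp h]
  have e1 : ‖a / (Ma:ℂ) - b / (Mb:ℂ)‖^2
      = x^2/Ma^2 - 2*(t/(Ma*Mb)) + y^2/Mb^2 := by
    rw [Complex.sq_norm, Complex.normSq_sub, Complex.normSq_div, Complex.normSq_div,
      Complex.normSq_ofReal, Complex.normSq_ofReal]
    have : (a / (Ma:ℂ) * conj (b / (Mb:ℂ))).re = t / (Ma * Mb) := by
      rw [map_div₀, Complex.conj_ofReal, div_mul_div_comm, ← Complex.ofReal_mul,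
        Complex.div_ofReal_re, ← ht]
    rw [this, Complex.sq_norm, Complex.sq_norm]
    ring
  have e2 : ((1/ε) * ‖a-b‖)^2 = (x^2 - 2*t + y^2)/ε^2 := by
    rw [mul_pow, Complex.sq_norm, Complex.normSq_sub, Complex.sq_norm, Complex.sq_norm, ht]
    ring
  have e3 : x^2/Ma^2 - 2*(t/(Ma*Mb)) + y^2/Mb^2
      = (x^2*Mb^2 - 2*t*(Ma*Mb) + y^2*Ma^2)/(Ma^2*Mb^2) := by
    field_simp
  have hsq : ‖a / (Ma:ℂ) - b / (Mb:ℂ)‖^2 ≤ ((1/ε) * ‖a-b‖)^2 := by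
    rw [e1, e2, e3, div_le_div_iff₀ (by positivity) (by positivity)]
    rcases le_or_gt x ε with hxε | hxε <;> rcases le_or_gt y ε with hyε | hyε
    · have ha : Ma = ε := max_eq_left hxε
      have hb : Mb = ε := max_eq_left hyε
      rw [ha, hb]; ring_nf; nlinarith [sq_nonneg ε, sq_nonneg (x-y)]
    · have ha : Ma = ε := max_eq_left hxε
      have hb : Mb = y := max_eq_right hyε.le
      rw [ha, hb]
      have h2 : 0 ≤ y*y + y*ε - 2*t := by
        have hxy : x*y ≤ ε*y := mul_le_mul_of_nonneg_right hxε hy0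
        have hεy : ε*y ≤ y*y := mul_le_mul_of_nonneg_right hyε.le hy0
        nlinarith
      have h3 : 0 ≤ y*(y-ε)*(y*y+y*ε-2*t) :=
        mul_nonneg (mul_nonneg hy0 (sub_nonneg.2 hyε.le)) h2
      nlinarith [mul_nonneg (sq_nonneg ε) h3]
    · have ha : Ma = x := max_eq_right hxε.le
      have hb : Mb = ε := max_eq_left hyε
      rw [ha, hb]
      have h2 : 0 ≤ x*x + x*ε - 2*t := by
        have hxy : x*y ≤ x*ε := mul_le_mul_of_nonneg_left hyε hx0
        have hεx : ε*x ≤ x*x := mul_le_mul_of_nonneg_right hxε.le hx0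
        nlinarith
      have h3 : 0 ≤ x*(x-ε)*(x*x+x*ε-2*t) :=
        mul_nonneg (mul_nonneg hx0 (sub_nonneg.2 hxε.le)) h2
      nlinarith [mul_nonneg (sq_nonneg ε) h3]
    · have ha : Ma = x := max_eq_right hxε.le
      have hb : Mb = y := max_eq_right hyε.le
      rw [ha, hb]
      have h2 : ε*ε ≤ x*y := mul_le_mul hxε.le hyε.le hε.le hx0
      have h4 : 0 ≤ x*y*(x*y-ε*ε)*(x*y-t) :=
        mul_nonneg (mul_nonneg (mul_nonneg hx0 hy0) (sub_nonneg.2 h2))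
          (sub_nonneg.2 htle)
      nlinarith [h4, mul_nonneg (mul_nonneg (sq_nonneg x) (sq_nonneg y)) (sq_nonneg (x-y))]
  calc ‖a / (Ma:ℂ) - b / (Mb:ℂ)‖
      = √(‖a / (Ma:ℂ) - b / (Mb:ℂ)‖^2) := (Real.sqrt_sq (by positivity)).symm
    _ ≤ √(((1/ε) * ‖a-b‖)^2) := Real.sqrt_le_sqrt hsq
    _ = (1/ε) * ‖a-b‖ := Real.sqrt_sq (by positivity)
end Aux

/-- For every `ε > 0`, the operator `Sign_ε` on `L²_ℂ(0,2)`, defined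
pointwise by `[Sign_ε(g)](s) = g(s)/max(ε,|g(s)|)`, is Lipschitz continuous with constant
`1/ε`. -/
theorem stmt14 (ε : ℝ) (hε : 0 < ε)
    (Sε : Y → Y)
    (hS : ∀ g : Y, ∀ᵐ s ∂μ2,
      Sε g s = g s / ((max ε ‖g s‖ : ℝ) : ℂ)) :
    ∀ g₁ g₂ : Y, ‖Sε g₁ - Sε g₂‖ ≤ (1 / ε) * ‖g₁ - g₂‖ := by
  intro g₁ g₂
  set c : NNReal := ⟨1/ε, by positivity⟩ with hc
  have hae : ∀ᵐ s ∂μ2, ‖(Sε g₁ - Sε g₂ : Y) s‖ ≤ (c : ℝ) * ‖(g₁ - g₂ : Y) s‖ := by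
    filter_upwards [hS g₁, hS g₂, Lp.coeFn_sub (Sε g₁) (Sε g₂), Lp.coeFn_sub g₁ g₂]
      with s h1 h2 h3 h4
    rw [h3, h4]
    simp only [Pi.sub_apply, h1, h2]
    exact signEps_lipschitz_pointwise ε hε (g₁ s) (g₂ s)
  have hbound := eLpNorm_le_nnreal_smul_eLpNorm_of_ae_le_mul hae 2
  rw [Lp.norm_def, Lp.norm_def]
  calc (eLpNorm (Sε g₁ - Sε g₂ : Y) 2 μ2).toReal
      ≤ (c • eLpNorm (g₁ - g₂ : Y) 2 μ2).toReal := by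
        apply ENNReal.toReal_mono _ hbound
        rw [ENNReal.smul_def, smul_eq_mul]
        exact ENNReal.mul_ne_top ENNReal.coe_ne_top (Lp.eLpNorm_ne_top _)
      _ = (1/ε) * (eLpNorm (g₁ - g₂ : Y) 2 μ2).toReal := by
        rw [ENNReal.smul_def, smul_eq_mul, ENNReal.toReal_mul, ENNReal.coe_toReal]
        norm_num [hc]
        exact Or.inl rfl
end
end
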